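/- arXiv:1702.08387 — 3 statements merged into one kernel-verified Lean document; each statement's English description precedes it below -/
import Mathlib

section
/- Let (X_n) be a Markov chain with operator P and invariant measure ν, f continuous with ∫ f dν = 0, and suppose f = g - Pg for a continuous function g with ‖g‖_∞ ≤ C'. Set S_n = Σ_{k=0}^{n-1} f(X_k). Then for every x, every ε > 0 and every n ∈ N, P_x(|S_n| > nε) ≤ 2 exp(−nε²/(8C'²) + ε/(4C') − 1/(2n)), provided nε > 2C'. -/
open MeasureTheory

section AuxAzuma
open Real

lemma hoeffding_core {p : ℝ} (hp0 : 0 ≤ p) (hp1 : p ≤ 1) (h : ℝ) :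
    exp (-(p*h)) * ((1-p) + p * exp h) ≤ exp (h^2/8) := by
  set q : ℝ := 1 - p with hq
  have hq0 : 0 ≤ q := by linarith
  -- positivity of D
  have hD : ∀ x : ℝ, 0 < q + p * exp x := by
    intro x
    rcases eq_or_lt_of_le hp0 with h0 | h0
    · simp [hq, ← h0]
    · have := exp_pos x; positivity
  -- G x = x/4 + p - p * exp x / (q + p * exp x), the derivative of F
  set G : ℝ → ℝ := fun x => x/4 + p - p * exp x / (q + p * exp x) with hG
  set F : ℝ → ℝ := fun x => x^2/8 + p*x - log (q + p * exp x) with hF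
  have hFd : ∀ x, HasDerivAt F (G x) x := by
    intro x
    have h1 : HasDerivAt (fun x : ℝ => q + p * exp x) (p * exp x) x := by
      simpa using ((hasDerivAt_exp x).const_mul p).const_add q
    have h2 : HasDerivAt (fun x : ℝ => log (q + p * exp x)) (p * exp x / (q + p * exp x)) x :=
      h1.log (hD x).ne'
    have h3 : HasDerivAt (fun x : ℝ => x^2/8 + p*x) (x/4 + p) x := by
      have := ((hasDerivAt_pow 2 x).div_const 8).add ((hasDerivAt_id x).const_mul p)
      exact this.congr_deriv (by ring)
    exact h3.sub h2
  have hGd : ∀ x, HasDerivAt G (1/4 - p * exp x * q / (q + p * exp x)^2) x := by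
    intro x
    have h1 : HasDerivAt (fun x : ℝ => q + p * exp x) (p * exp x) x := by
      simpa using ((hasDerivAt_exp x).const_mul p).const_add q
    have h2 : HasDerivAt (fun x : ℝ => p * exp x) (p * exp x) x := (hasDerivAt_exp x).const_mul p
    have h3 := h2.div h1 (hD x).ne'
    have h4 : HasDerivAt (fun x : ℝ => x/4 + p) (1/4) x := by
      simpa using ((hasDerivAt_id x).div_const 4).add_const p
    have h5 := h4.sub h3
    exact h5.congr_deriv (by ring)
  -- G is monotone
  have hGmono : Monotone G := by
    apply monotone_of_deriv_nonneg (fun x => (hGd x).differentiableAt)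
    intro x
    rw [(hGd x).deriv]
    have hDx := hD x
    have hex := exp_pos x
    have key : 4 * (p * exp x * q) ≤ (q + p * exp x)^2 := by nlinarith [sq_nonneg (q - p * exp x)]
    rw [sub_nonneg, div_le_iff₀ (by positivity)]
    nlinarith
  have hG0 : G 0 = 0 := by
    simp only [hG]
    rw [exp_zero]
    have : q + p * 1 = 1 := by simp [hq]
    rw [this]
    ring_nf
  have hF0 : F 0 = 0 := by
    simp only [hF]
    rw [exp_zero]
    have : q + p * 1 = 1 := by simp [hq]
    rw [this, log_one]
    ring
  -- F ≥ 0
  have hFnonneg : ∀ x, 0 ≤ F x := by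
    intro x
    rcases le_total 0 x with hx | hx
    · have mono : MonotoneOn F (Set.Ici (0:ℝ)) := by
        apply monotoneOn_of_deriv_nonneg (convex_Ici 0)
          (fun y _ => (hFd y).differentiableAt.continuousAt.continuousWithinAt)
          (fun y _ => (hFd y).differentiableAt.differentiableWithinAt)
        intro y hy
        rw [interior_Ici] at hy
        rw [(hFd y).deriv]
        calc (0:ℝ) = G 0 := hG0.symm
        _ ≤ G y := hGmono hy.le
      calc (0:ℝ) = F 0 := hF0.symm
      _ ≤ F x := mono (by simp) (by simpa using hx) hx
    · have mono : AntitoneOn F (Set.Iic (0:ℝ)) := by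
        apply antitoneOn_of_deriv_nonpos (convex_Iic 0)
          (fun y _ => (hFd y).differentiableAt.continuousAt.continuousWithinAt)
          (fun y _ => (hFd y).differentiableAt.differentiableWithinAt)
        intro y hy
        rw [interior_Iic] at hy
        rw [(hFd y).deriv]
        calc G y ≤ G 0 := hGmono hy.le
        _ = 0 := hG0
      calc (0:ℝ) = F 0 := hF0.symm
      _ ≤ F x := mono (by simpa using hx) (by simp) hx
  -- conclude
  have := hFnonneg h
  simp only [hF] at this
  have hlog : log (q + p * exp h) ≤ h^2/8 + p*h := by linarith
  have hDh := hD h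
  calc exp (-(p*h)) * ((1-p) + p * exp h) = exp (-(p*h)) * (q + p * exp h) := by rw [hq]
  _ ≤ exp (-(p*h)) * exp (h^2/8 + p*h) := by
      apply mul_le_mul_of_nonneg_left _ (exp_nonneg _)
      calc q + p * exp h = exp (log (q + p * exp h)) := (exp_log hDh).symm
      _ ≤ exp (h^2/8 + p*h) := exp_le_exp.mpr hlog
  _ = exp (h^2/8) := by rw [← exp_add]; ring_nf

lemma mgf_step {Ω : Type*} {mΩ : MeasurableSpace Ω} (ℙ : Measure Ω) [IsProbabilityMeasure ℙ]
    {m' : MeasurableSpace Ω} (hm : m' ≤ mΩ) (Y m : Ω → ℝ) (C' : ℝ) (hC' : 0 < C')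
    (hY : StronglyMeasurable[mΩ] Y)
    (hmm : StronglyMeasurable[m'] m)
    (hYb : ∀ ω, |Y ω| ≤ C') (hmb : ∀ ω, |m ω| ≤ C')
    (hcond : ℙ[Y|m'] =ᵐ[ℙ] m) (l : ℝ) :
    ℙ[fun ω => exp (l * (Y ω - m ω))|m'] ≤ᵐ[ℙ] fun _ => exp (l^2*C'^2/2) := by
  set A : ℝ := (exp (-(l*C')) + exp (l*C'))/2 with hA
  set B : ℝ := (exp (l*C') - exp (-(l*C')))/(2*C') with hB
  have hmm0 : StronglyMeasurable[mΩ] m := hmm.mono hm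
  have hconv : ∀ y : ℝ, |y| ≤ C' → exp (l * y) ≤ A + B * y := by
    intro y hy
    have h2 : -C' ≤ y := (abs_le.mp hy).1
    have h3 : y ≤ C' := (abs_le.mp hy).2
    have ha : (0:ℝ) ≤ (C' - y)/(2*C') := by
      have : 0 ≤ C' - y := by linarith
      positivity
    have hb : (0:ℝ) ≤ (C' + y)/(2*C') := by
      have : 0 ≤ C' + y := by linarith
      positivity
    have hab : (C' - y)/(2*C') + (C' + y)/(2*C') = 1 := by field_simp; ring
    have hcv := convexOn_exp.2 (Set.mem_univ (-(l*C'))) (Set.mem_univ (l*C')) ha hb hab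
    simp only [smul_eq_mul] at hcv
    have heq : (C' - y)/(2*C') * (-(l*C')) + (C' + y)/(2*C') * (l*C') = l * y := by
      field_simp; ring
    rw [heq] at hcv
    refine hcv.trans (le_of_eq ?_)
    rw [hA, hB]
    field_simp
    ring
  have hexpYsm : AEStronglyMeasurable[mΩ] (fun ω => exp (l * Y ω)) ℙ :=
    ((continuous_exp.comp (continuous_const.mul continuous_id)).comp_stronglyMeasurable hY).aestronglyMeasurable
  have hexpYb : ∀ ω, ‖exp (l * Y ω)‖ ≤ exp (|l| * C') := by
    intro ω
    rw [norm_eq_abs, abs_exp, exp_le_exp]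
    calc l * Y ω ≤ |l * Y ω| := le_abs_self _
    _ = |l| * |Y ω| := abs_mul _ _
    _ ≤ |l| * C' := mul_le_mul_of_nonneg_left (hYb ω) (abs_nonneg l)
  have hexpY : Integrable (fun ω => exp (l * Y ω)) ℙ :=
    (integrable_const _).mono' hexpYsm (Filter.Eventually.of_forall hexpYb)
  have hYint : Integrable Y ℙ :=
    (integrable_const C').mono' hY.aestronglyMeasurable
      (Filter.Eventually.of_forall fun ω => by rw [norm_eq_abs]; exact hYb ω)
  have hlin : Integrable (fun ω => A + B * Y ω) ℙ :=
    (integrable_const A).add (hYint.const_mul B)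
  have step1 : ℙ[fun ω => exp (l * Y ω)|m'] ≤ᵐ[ℙ] fun ω => A + B * m ω := by
    have h1 : ℙ[fun ω => exp (l * Y ω)|m'] ≤ᵐ[ℙ] ℙ[fun ω => A + B * Y ω|m'] :=
      condExp_mono hexpY hlin (Filter.Eventually.of_forall fun ω => hconv (Y ω) (hYb ω))
    have ha : ℙ[fun ω => A + B * Y ω|m']
        =ᵐ[ℙ] ℙ[fun _ => A|m'] + ℙ[fun ω => B * Y ω|m'] :=
      condExp_add (integrable_const A) (hYint.const_mul B) m'
    have hb : ℙ[fun ω => B * Y ω|m'] =ᵐ[ℙ] fun ω => B * (ℙ[Y|m']) ω := by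
      simpa [Pi.smul_def, smul_eq_mul] using condExp_smul (μ := ℙ) (m := m') B Y
    have hc : ℙ[fun _ => A|m'] = fun _ => A := condExp_const hm A
    filter_upwards [h1, ha, hb, hcond] with ω k1 k2 k3 k4
    refine k1.trans (le_of_eq ?_)
    rw [k2]
    simp only [Pi.add_apply, hc, k3, k4]
  have hfSM : StronglyMeasurable[m'] (fun ω => exp (-(l * m ω))) :=
    (continuous_exp.comp continuous_neg).comp_stronglyMeasurable (hmm.const_mul l)
  have hfb : ∀ ω, exp (-(l * m ω)) ≤ exp (|l| * C') := by
    intro ω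
    rw [exp_le_exp]
    calc -(l * m ω) ≤ |l * m ω| := neg_le_abs _
    _ = |l| * |m ω| := abs_mul _ _
    _ ≤ |l| * C' := mul_le_mul_of_nonneg_left (hmb ω) (abs_nonneg l)
  have hprod : Integrable ((fun ω => exp (-(l * m ω))) * fun ω => exp (l * Y ω)) ℙ := by
    refine (integrable_const (exp (|l| * C') * exp (|l| * C'))).mono'
      ((hfSM.mono hm).aestronglyMeasurable.mul hexpYsm)
      (Filter.Eventually.of_forall fun ω => ?_)
    simp only [Pi.mul_apply, norm_eq_abs, abs_mul, abs_exp]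
    have h1 := hfb ω
    have h2 := hexpYb ω
    rw [norm_eq_abs, abs_exp] at h2
    have := exp_nonneg (-(l * m ω))
    have := exp_nonneg (l * Y ω)
    nlinarith [exp_nonneg (|l| * C')]
  have step2 : ℙ[fun ω => exp (l * (Y ω - m ω))|m']
      =ᵐ[ℙ] fun ω => exp (-(l * m ω)) * (ℙ[fun ω => exp (l * Y ω)|m']) ω := by
    have key := condExp_mul_of_stronglyMeasurable_left (m := m') (μ := ℙ) hfSM hprod hexpY
    have heq : (fun ω => exp (l * (Y ω - m ω)))
        = (fun ω => exp (-(l * m ω))) * fun ω => exp (l * Y ω) := by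
      funext ω
      simp only [Pi.mul_apply, ← exp_add]
      ring_nf
    rw [heq]
    exact key
  have final : ∀ ω, exp (-(l * m ω)) * (A + B * m ω) ≤ exp (l^2*C'^2/2) := by
    intro ω
    set p : ℝ := (C' + m ω)/(2*C') with hp
    have h2 : -C' ≤ m ω := (abs_le.mp (hmb ω)).1
    have h3 : m ω ≤ C' := (abs_le.mp (hmb ω)).2
    have hp0 : 0 ≤ p := by
      have : 0 ≤ C' + m ω := by linarith
      positivity
    have hp1 : p ≤ 1 := by
      rw [hp, div_le_one (by positivity)]; linarith
    have core := hoeffding_core hp0 hp1 (2*l*C')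
    have e2 : (2*l*C')^2/8 = l^2*C'^2/2 := by ring
    rw [e2] at core
    refine le_trans (le_of_eq ?_) core
    have hsplit : -(p*(2*l*C')) = -(l*C') + -(l * m ω) := by
      rw [hp]; field_simp; ring
    have hdbl : (2*l*C') = l*C' + l*C' := by ring
    rw [hsplit, hdbl, exp_add, exp_add]
    have hEE' : exp (l*C') * exp (-(l*C')) = 1 := by rw [← exp_add]; simp
    rw [hp, hA, hB]
    field_simp
    linear_combination (-exp (l*C') * (C' + m ω)) * hEE'
  filter_upwards [step1, step2] with ω k1 k2
  rw [k2]
  refine le_trans ?_ (final ω)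
  have hnn : 0 ≤ exp (-(l * m ω)) := exp_nonneg _
  exact mul_le_mul_of_nonneg_left k1 hnn

lemma mgf_sum {Ω : Type*} {mΩ : MeasurableSpace Ω} (ℙ : Measure Ω) [IsProbabilityMeasure ℙ]
    (ℱ : Filtration ℕ mΩ) (Y m : ℕ → Ω → ℝ) (C' : ℝ) (hC' : 0 < C')
    (hY : ∀ k, StronglyMeasurable[ℱ (k+1)] (Y k))
    (hm : ∀ k, StronglyMeasurable[ℱ k] (m k))
    (hYb : ∀ k ω, |Y k ω| ≤ C') (hmb : ∀ k ω, |m k ω| ≤ C')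
    (hcond : ∀ k, ℙ[Y k|ℱ k] =ᵐ[ℙ] m k) (l : ℝ) (n : ℕ) :
    ∫ ω, exp (l * ∑ k ∈ Finset.range n, (Y k ω - m k ω)) ∂ℙ
      ≤ exp (n * (l^2*C'^2/2)) := by
  -- measurability of partial sums
  have hMsm : ∀ n : ℕ, StronglyMeasurable[ℱ n]
      (fun ω => ∑ k ∈ Finset.range n, (Y k ω - m k ω)) := by
    intro n
    apply Finset.stronglyMeasurable_fun_sum
    intro k hk
    rw [Finset.mem_range] at hk
    exact ((hY k).mono (ℱ.mono hk)).sub ((hm k).mono (ℱ.mono hk.le))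
  have hMb : ∀ n : ℕ, ∀ ω, |∑ k ∈ Finset.range n, (Y k ω - m k ω)| ≤ n * (2*C') := by
    intro n ω
    calc |∑ k ∈ Finset.range n, (Y k ω - m k ω)|
        ≤ ∑ k ∈ Finset.range n, |Y k ω - m k ω| := Finset.abs_sum_le_sum_abs _ _
    _ ≤ ∑ k ∈ Finset.range n, (2*C') := by
        apply Finset.sum_le_sum
        intro k _
        calc |Y k ω - m k ω| ≤ |Y k ω| + |m k ω| := abs_sub _ _
        _ ≤ 2*C' := by have := hYb k ω; have := hmb k ω; linarith
    _ = n * (2*C') := by simp [mul_comm]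
  induction n with
  | zero => simp
  | succ n ih =>
    set M : Ω → ℝ := fun ω => ∑ k ∈ Finset.range n, (Y k ω - m k ω) with hM
    set f : Ω → ℝ := fun ω => exp (l * M ω) with hf
    set g : Ω → ℝ := fun ω => exp (l * (Y n ω - m n ω)) with hgdef
    have hfsm : StronglyMeasurable[ℱ n] f :=
      (continuous_exp.comp (continuous_const.mul continuous_id)).comp_stronglyMeasurable (hMsm n)
    have hfsm0 : StronglyMeasurable[mΩ] f := hfsm.mono (ℱ.le n)
    have hfb : ∀ ω, ‖f ω‖ ≤ exp (|l| * (n * (2*C'))) := by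
      intro ω
      rw [norm_eq_abs, hf, abs_exp, exp_le_exp]
      calc l * M ω ≤ |l * M ω| := le_abs_self _
      _ = |l| * |M ω| := abs_mul _ _
      _ ≤ |l| * (n * (2*C')) := mul_le_mul_of_nonneg_left (hMb n ω) (abs_nonneg l)
    have hgsm0 : StronglyMeasurable[mΩ] g := by
      apply (continuous_exp.comp (continuous_const.mul continuous_id)).comp_stronglyMeasurable
      exact ((hY n).mono (ℱ.le (n+1))).sub ((hm n).mono (ℱ.le n))
    have hgb : ∀ ω, ‖g ω‖ ≤ exp (|l| * (2*C')) := by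
      intro ω
      rw [norm_eq_abs, hgdef, abs_exp, exp_le_exp]
      calc l * (Y n ω - m n ω) ≤ |l * (Y n ω - m n ω)| := le_abs_self _
      _ = |l| * |Y n ω - m n ω| := abs_mul _ _
      _ ≤ |l| * (2*C') := by
          apply mul_le_mul_of_nonneg_left _ (abs_nonneg l)
          calc |Y n ω - m n ω| ≤ |Y n ω| + |m n ω| := abs_sub _ _
          _ ≤ 2*C' := by have := hYb n ω; have := hmb n ω; linarith
    have hgint : Integrable g ℙ :=
      (integrable_const _).mono' hgsm0.aestronglyMeasurable (Filter.Eventually.of_forall hgb)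
    have hfg : Integrable (f * g) ℙ := by
      refine (integrable_const (exp (|l| * (n * (2*C'))) * exp (|l| * (2*C')))).mono'
        (hfsm0.aestronglyMeasurable.mul hgsm0.aestronglyMeasurable)
        (Filter.Eventually.of_forall fun ω => ?_)
      simp only [Pi.mul_apply, norm_mul]
      have h1 := hfb ω; have h2 := hgb ω
      have := norm_nonneg (f ω); have := norm_nonneg (g ω)
      nlinarith [exp_nonneg (|l| * (n * (2*C')))]
    -- key: the sum splits
    have hsplit : (fun ω => exp (l * ∑ k ∈ Finset.range (n+1), (Y k ω - m k ω))) = f * g := by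
      funext ω
      simp only [Pi.mul_apply, hf, hgdef, hM, ← exp_add, Finset.sum_range_succ, mul_add]
    rw [hsplit]
    have hmle := ℱ.le n
    have hstep := mgf_step ℙ hmle (Y n) (m n) C' hC' ((hY n).mono (ℱ.le (n+1)))
      (hm n) (hYb n) (hmb n) (hcond n) l
    have e1 : ∫ ω, (f * g) ω ∂ℙ = ∫ ω, (ℙ[f * g|ℱ n]) ω ∂ℙ := (integral_condExp hmle).symm
    have e2 : ℙ[f * g|ℱ n] =ᵐ[ℙ] f * ℙ[g|ℱ n] := condExp_mul_of_stronglyMeasurable_left hfsm hfg hgint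
    have hgcond : g = fun ω => exp (l * (Y n ω - m n ω)) := rfl
    have e3 : f * ℙ[g|ℱ n] ≤ᵐ[ℙ] fun ω => f ω * exp (l^2*C'^2/2) := by
      filter_upwards [hstep] with ω hω
      simp only [Pi.mul_apply]
      exact mul_le_mul_of_nonneg_left hω (exp_nonneg _)
    have hint1 : Integrable (f * ℙ[g|ℱ n]) ℙ := by
      apply Integrable.bdd_mul integrable_condExp hfsm0.aestronglyMeasurable
      exact Filter.Eventually.of_forall hfb
    have hint2 : Integrable (fun ω => f ω * exp (l^2*C'^2/2)) ℙ := by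
      apply Integrable.mul_const
      exact (integrable_const _).mono' hfsm0.aestronglyMeasurable (Filter.Eventually.of_forall hfb)
    calc ∫ ω, (f * g) ω ∂ℙ = ∫ ω, (ℙ[f * g|ℱ n]) ω ∂ℙ := e1
    _ = ∫ ω, (f * ℙ[g|ℱ n]) ω ∂ℙ := integral_congr_ae e2
    _ ≤ ∫ ω, f ω * exp (l^2*C'^2/2) ∂ℙ := integral_mono_ae hint1 hint2 e3
    _ = (∫ ω, f ω ∂ℙ) * exp (l^2*C'^2/2) := integral_mul_const _ _
    _ ≤ exp (n * (l^2*C'^2/2)) * exp (l^2*C'^2/2) := by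
        apply mul_le_mul_of_nonneg_right _ (exp_nonneg _)
        exact ih
    _ = exp ((n+1 : ℕ) * (l^2*C'^2/2)) := by rw [← exp_add]; push_cast; ring_nf

lemma chernoff {Ω : Type*} {mΩ : MeasurableSpace Ω} (ℙ : Measure Ω) [IsProbabilityMeasure ℙ]
    (Z : Ω → ℝ) (hZ : AEStronglyMeasurable Z ℙ)
    (C' : ℝ) (hC' : 0 < C') (n : ℕ) (hn : 1 ≤ n) (R : ℝ) (hZb : ∀ ω, |Z ω| ≤ R)
    (hmgf : ∀ l : ℝ, ∫ ω, exp (l * Z ω) ∂ℙ ≤ exp (n*(l^2*C'^2/2)))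
    (t : ℝ) (ht : 0 < t) :
    ℙ {ω | t ≤ Z ω} ≤ ENNReal.ofReal (exp (-(t^2/(2*n*C'^2)))) := by
  have hn0 : (0:ℝ) < n := by exact_mod_cast hn
  set lam : ℝ := t/(n*C'^2) with hlam
  have hlam0 : 0 < lam := by positivity
  have hint : Integrable (fun ω => exp (lam * Z ω)) ℙ := by
    refine (integrable_const (exp (|lam| * R))).mono'
      ((continuous_exp.comp (continuous_const.mul continuous_id)).comp_aestronglyMeasurable hZ)
      (Filter.Eventually.of_forall fun ω => ?_)
    rw [norm_eq_abs, abs_exp, exp_le_exp]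
    calc lam * Z ω ≤ |lam * Z ω| := le_abs_self _
    _ = |lam| * |Z ω| := abs_mul _ _
    _ ≤ |lam| * R := mul_le_mul_of_nonneg_left (hZb ω) (abs_nonneg _)
  have key := ProbabilityTheory.measure_ge_le_exp_mul_mgf (X := Z) (μ := ℙ) t hlam0.le hint
  have hmgfle : ProbabilityTheory.mgf Z ℙ lam ≤ exp (n*(lam^2*C'^2/2)) := hmgf lam
  have h2 : (ℙ {ω | t ≤ Z ω}).toReal ≤ exp (-(t^2/(2*n*C'^2))) := by
    refine key.trans ?_
    calc exp (-lam * t) * ProbabilityTheory.mgf Z ℙ lam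
        ≤ exp (-lam * t) * exp (n*(lam^2*C'^2/2)) :=
          mul_le_mul_of_nonneg_left hmgfle (exp_nonneg _)
    _ = exp (-lam * t + n*(lam^2*C'^2/2)) := by rw [← exp_add]
    _ = exp (-(t^2/(2*n*C'^2))) := by
        congr 1
        rw [hlam]
        field_simp
        ring
  calc ℙ {ω | t ≤ Z ω} = ENNReal.ofReal ((ℙ {ω | t ≤ Z ω}).toReal) :=
        (ENNReal.ofReal_toReal (measure_ne_top _ _)).symm
  _ ≤ ENNReal.ofReal (exp (-(t^2/(2*n*C'^2)))) := ENNReal.ofReal_le_ofReal h2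

end AuxAzuma

section Main
open Real

set_option maxHeartbeats 2000000 in
/-- Non-concentration inequality: if `f = g - Pg` with `‖g‖_∞ ≤ C'` and `∫ f dν = 0`,
then for the Markov chain started at `x`, `P_x(|S_n f| > nε)` is bounded by
`2 exp(-nε²/(8C'²) + ε/(4C') - 1/(2n))` whenever `nε > 2C'` (Azuma–Hoeffding). -/
theorem stmt6 {X Ω : Type*} [MetricSpace X] [CompactSpace X] [MeasurableSpace X]
    [BorelSpace X] {mΩ : MeasurableSpace Ω}
    (ℙx : Measure Ω) [IsProbabilityMeasure ℙx]
    (ℱ : Filtration ℕ mΩ)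
    (Xc : ℕ → Ω → X)
    (hadapt : ∀ n, StronglyMeasurable[ℱ n] (Xc n))
    (P : C(X, ℝ) →ₗ[ℝ] C(X, ℝ))
    (hPpos : ∀ h : C(X, ℝ), 0 ≤ h → 0 ≤ P h) (hP1 : P 1 = 1)
    (ν : Measure X) [IsProbabilityMeasure ν]
    (hν : ∀ h : C(X, ℝ), ∫ x, (P h) x ∂ν = ∫ x, h x ∂ν)
    (f g : C(X, ℝ)) (hfν : ∫ x, f x ∂ν = 0)
    (hfg : ∀ x, f x = g x - (P g) x)
    (C' : ℝ) (hC' : 0 < C') (hg : ‖g‖ ≤ C')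
    (hMarkov : ∀ n, ℙx[fun ω => g (Xc (n + 1) ω)|ℱ n]
        =ᵐ[ℙx] fun ω => (P g) (Xc n ω)) :
    ∀ ε : ℝ, 0 < ε → ∀ n : ℕ, 2 * C' < n * ε →
      ℙx {ω | (n : ℝ) * ε < |∑ k ∈ Finset.range n, f (Xc k ω)|} ≤
        ENNReal.ofReal (2 * Real.exp
          (-((n : ℝ) * ε ^ 2) / (8 * C' ^ 2) + ε / (4 * C') - 1 / (2 * n))) := by
  intro ε hε n hne
  -- pointwise bounds on g and P g
  have hgx : ∀ x, |g x| ≤ C' := fun x => by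
    calc |g x| = ‖g x‖ := (Real.norm_eq_abs _).symm
    _ ≤ ‖g‖ := g.norm_coe_le_norm x
    _ ≤ C' := hg
  have hPgx : ∀ x, |(P g) x| ≤ C' := by
    intro x
    have h1 : (0:C(X,ℝ)) ≤ C' • 1 - g := by
      rw [ContinuousMap.le_def]
      intro y
      simp only [ContinuousMap.zero_apply, ContinuousMap.sub_apply, ContinuousMap.smul_apply,
        ContinuousMap.one_apply, smul_eq_mul, mul_one]
      have := (abs_le.mp (hgx y)).2; linarith
    have h2 : (0:C(X,ℝ)) ≤ C' • 1 + g := by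
      rw [ContinuousMap.le_def]
      intro y
      simp only [ContinuousMap.zero_apply, ContinuousMap.add_apply, ContinuousMap.smul_apply,
        ContinuousMap.one_apply, smul_eq_mul, mul_one]
      have := (abs_le.mp (hgx y)).1; linarith
    have k1 := hPpos _ h1
    have k2 := hPpos _ h2
    rw [map_sub, LinearMap.map_smul, hP1, ContinuousMap.le_def] at k1
    rw [map_add, LinearMap.map_smul, hP1, ContinuousMap.le_def] at k2
    have e1 := k1 x
    have e2 := k2 x
    simp only [ContinuousMap.zero_apply, ContinuousMap.sub_apply, ContinuousMap.add_apply,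
      ContinuousMap.smul_apply, ContinuousMap.one_apply, smul_eq_mul, mul_one] at e1 e2
    rw [abs_le]; constructor <;> linarith
  have hn1 : 1 ≤ n := by
    rcases Nat.eq_zero_or_pos n with rfl | h
    · simp only [Nat.cast_zero, zero_mul] at hne; linarith
    · exact h
  have hn0 : (0:ℝ) < n := by exact_mod_cast hn1
  -- setup martingale increments
  set Y : ℕ → Ω → ℝ := fun k ω => g (Xc (k+1) ω) with hY
  set m : ℕ → Ω → ℝ := fun k ω => (P g) (Xc k ω) with hm
  set Z : Ω → ℝ := fun ω => ∑ k ∈ Finset.range n, (Y k ω - m k ω) with hZ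
  set S : Ω → ℝ := fun ω => ∑ k ∈ Finset.range n, f (Xc k ω) with hS
  have hYsm : ∀ k, StronglyMeasurable[ℱ (k+1)] (Y k) := fun k =>
    (map_continuous g).comp_stronglyMeasurable (hadapt (k+1))
  have hmsm : ∀ k, StronglyMeasurable[ℱ k] (m k) := fun k =>
    (map_continuous (P g)).comp_stronglyMeasurable (hadapt k)
  have hYb : ∀ k ω, |Y k ω| ≤ C' := fun k ω => hgx _
  have hmb : ∀ k ω, |m k ω| ≤ C' := fun k ω => hPgx _
  have hZsm : StronglyMeasurable[mΩ] Z := by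
    apply Finset.stronglyMeasurable_fun_sum
    intro k _
    exact (((hYsm k).mono (ℱ.le (k+1))).sub ((hmsm k).mono (ℱ.le k)))
  have hZb : ∀ ω, |Z ω| ≤ n * (2*C') := by
    intro ω
    calc |Z ω| ≤ ∑ k ∈ Finset.range n, |Y k ω - m k ω| := Finset.abs_sum_le_sum_abs _ _
    _ ≤ ∑ k ∈ Finset.range n, (2*C') := by
        apply Finset.sum_le_sum
        intro k _
        calc |Y k ω - m k ω| ≤ |Y k ω| + |m k ω| := abs_sub _ _
        _ ≤ 2*C' := by have := hYb k ω; have := hmb k ω; linarith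
    _ = n * (2*C') := by simp [mul_comm]
  -- decomposition S = Z + g(X_0) - g(X_n)
  have hdecomp : ∀ ω, S ω - Z ω = g (Xc 0 ω) - g (Xc n ω) := by
    intro ω
    have : S ω - Z ω = ∑ k ∈ Finset.range n, (g (Xc k ω) - g (Xc (k+1) ω)) := by
      rw [hS, hZ, ← Finset.sum_sub_distrib]
      apply Finset.sum_congr rfl
      intro k _
      rw [hfg]
      ring
    rw [this]
    exact Finset.sum_range_sub' (fun k => g (Xc k ω)) n
  -- mgf bounds
  have hmgfZ : ∀ l : ℝ, ∫ ω, exp (l * Z ω) ∂ℙx ≤ exp (n*(l^2*C'^2/2)) := fun l =>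
    mgf_sum ℙx ℱ Y m C' hC' hYsm hmsm hYb hmb hMarkov l n
  have hmgfNZ : ∀ l : ℝ, ∫ ω, exp (l * (-Z ω)) ∂ℙx ≤ exp (n*(l^2*C'^2/2)) := by
    intro l
    have := hmgfZ (-l)
    simp only [neg_mul, mul_neg] at this ⊢
    convert this using 3
    ring
  set t : ℝ := n * ε - 2*C' with ht
  have ht0 : 0 < t := by rw [ht]; linarith
  -- case ε ≥ 2 C' : the event is empty
  rcases le_or_gt (2*C') ε with hcase | hcase
  · have hempty : {ω | (n : ℝ) * ε < |S ω|} = ∅ := by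
      ext ω
      simp only [Set.mem_setOf_eq, Set.mem_empty_iff_false, iff_false, not_lt]
      calc |S ω| ≤ ∑ k ∈ Finset.range n, |f (Xc k ω)| := Finset.abs_sum_le_sum_abs _ _
      _ ≤ ∑ k ∈ Finset.range n, (2*C') := by
          apply Finset.sum_le_sum
          intro k _
          rw [hfg]
          calc |g (Xc k ω) - (P g) (Xc k ω)| ≤ |g (Xc k ω)| + |(P g) (Xc k ω)| := abs_sub _ _
          _ ≤ 2*C' := by have := hgx (Xc k ω); have := hPgx (Xc k ω); linarith
      _ = n * (2*C') := by simp [mul_comm]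
      _ ≤ n * ε := by apply mul_le_mul_of_nonneg_left hcase hn0.le
    rw [hempty]
    simp
  · -- main case : ε < 2 C', so n ≥ 2
    have hn2 : 2 ≤ n := by
      rcases Nat.lt_or_ge n 2 with h | h
      · exfalso
        interval_cases n
        simp only [Nat.cast_one, one_mul] at hne; linarith
      · exact h
    have hn2' : (2:ℝ) ≤ n := by exact_mod_cast hn2
    -- union bound
    have hsub : {ω | (n : ℝ) * ε < |S ω|} ⊆ {ω | t ≤ Z ω} ∪ {ω | t ≤ -Z ω} := by
      intro ω hω
      simp only [Set.mem_setOf_eq] at hω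
      have h1 : |S ω - Z ω| ≤ 2*C' := by
        rw [hdecomp ω]
        calc |g (Xc 0 ω) - g (Xc n ω)| ≤ |g (Xc 0 ω)| + |g (Xc n ω)| := abs_sub _ _
        _ ≤ 2*C' := by have := hgx (Xc 0 ω); have := hgx (Xc n ω); linarith
      have h2 : t ≤ |Z ω| := by
        have : |S ω| ≤ |Z ω| + |S ω - Z ω| := by
          calc |S ω| = |Z ω + (S ω - Z ω)| := by ring_nf
          _ ≤ |Z ω| + |S ω - Z ω| := abs_add_le _ _
        rw [ht]; linarith
      rcases le_total 0 (Z ω) with hz | hz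
      · left; rw [Set.mem_setOf_eq]; rwa [abs_of_nonneg hz] at h2
      · right; rw [Set.mem_setOf_eq]; rw [abs_of_nonpos hz] at h2; exact h2
    have hcZ := chernoff ℙx Z (hZsm.aestronglyMeasurable) C' hC' n hn1 (n*(2*C')) hZb hmgfZ t ht0
    have hcNZ := chernoff ℙx (fun ω => -Z ω) (hZsm.neg.aestronglyMeasurable) C' hC' n hn1
      (n*(2*C')) (fun ω => by rw [abs_neg]; exact hZb ω) hmgfNZ t ht0
    have hunion : ℙx {ω | (n : ℝ) * ε < |S ω|}
        ≤ ENNReal.ofReal (2 * exp (-(t^2/(2*n*C'^2)))) := by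
      calc ℙx {ω | (n : ℝ) * ε < |S ω|} ≤ ℙx ({ω | t ≤ Z ω} ∪ {ω | t ≤ -Z ω}) :=
            measure_mono hsub
      _ ≤ ℙx {ω | t ≤ Z ω} + ℙx {ω | t ≤ -Z ω} := measure_union_le _ _
      _ ≤ ENNReal.ofReal (exp (-(t^2/(2*n*C'^2)))) + ENNReal.ofReal (exp (-(t^2/(2*n*C'^2)))) :=
            add_le_add hcZ hcNZ
      _ = ENNReal.ofReal (2 * exp (-(t^2/(2*n*C'^2)))) := by
            rw [← ENNReal.ofReal_add (exp_nonneg _) (exp_nonneg _)]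
            ring_nf
    set T : ℝ := -((n : ℝ) * ε ^ 2) / (8 * C' ^ 2) + ε / (4 * C') - 1 / (2 * n) with hT
    rcases le_or_gt 0 (3*(n*ε)^2 - 14*(n*ε)*C' + 12*C'^2) with hq | hq
    · -- Chernoff bound dominates
      refine hunion.trans (ENNReal.ofReal_le_ofReal ?_)
      have hle : -(t^2/(2*n*C'^2)) ≤ T := by
        have h8 : (0:ℝ) < 8*n*C'^2 := by positivity
        have hTe : T = (-(((n:ℝ)*ε)^2) + 2*((n:ℝ)*ε)*C' - 4*C'^2)/(8*(n:ℝ)*C'^2) := by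
          rw [hT]; field_simp; ring
        have hLe : -(t^2/(2*(n:ℝ)*C'^2)) = (-(4*t^2))/(8*(n:ℝ)*C'^2) := by
          rw [ht]; field_simp; ring
        rw [hTe, hLe, div_le_div_iff_of_pos_right h8]
        rw [ht]
        nlinarith [hq]
      have := exp_le_exp.mpr hle
      linarith
    · -- trivial bound dominates
      have hL : Real.log 2 > 0.6931471803 := Real.log_two_gt_d9
      have hu : (n:ℝ)*ε ≤ 3.6*C' := by
        nlinarith [hq, sq_nonneg ((n:ℝ)*ε - 3.6*C'), mul_pos hC' hC']
      have key : ((n:ℝ)*ε)^2 - 2*((n:ℝ)*ε)*C' + 4*C'^2 ≤ 8*(n:ℝ)*C'^2*Real.log 2 := by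
        nlinarith [hq, hu, hL, hn2', mul_pos hC' hC', hne, hC',
          mul_nonneg (mul_nonneg (by linarith : (0:ℝ) ≤ (n:ℝ) - 2) (sq_nonneg C'))
            (by linarith : (0:ℝ) ≤ Real.log 2),
          mul_nonneg (sub_nonneg.2 hu) hC'.le]
      have h8 : (0:ℝ) < 8*n*C'^2 := by positivity
      have hTe : T = (-(((n:ℝ)*ε)^2) + 2*((n:ℝ)*ε)*C' - 4*C'^2)/(8*(n:ℝ)*C'^2) := by
        rw [hT]; field_simp; ring
      have hTlog : -Real.log 2 ≤ T := by
        rw [hTe]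
        have hstep : -Real.log 2 * (8*(n:ℝ)*C'^2) ≤
            -(((n:ℝ)*ε)^2) + 2*((n:ℝ)*ε)*C' - 4*C'^2 := by nlinarith [key]
        exact (le_div_iff₀ h8).mpr hstep
      have h2T : 1 ≤ 2 * exp T := by
        have : exp (-Real.log 2) ≤ exp T := exp_le_exp.mpr hTlog
        rw [exp_neg, Real.exp_log (by norm_num : (0:ℝ) < 2)] at this
        linarith
      refine le_trans prob_le_one ?_
      rw [show (1:ENNReal) = ENNReal.ofReal 1 by simp]
      exact ENNReal.ofReal_le_ofReal h2T
end Main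
end

section
/- Let B ⊂ T^d be finite and F ⊂ T^1 the set of all coordinates of elements of B. If F is (C,L)-diophantine, then with C' = C/(d|B|)^L, for any nonzero family (M_b) ∈ M_d(Z)^B: d(Σ_b M_b b, 0) ≤ C'/(max_b ‖M_b‖)^L implies Σ_b M_b b = 0. Conversely, if such a C' exists for matrix families with exponent L, then F is (C'/d^L, L)-diophantine. -/
open MeasureTheory

noncomputable section

/-- The torus `T^d = R^d / Z^d`. -/
abbrev Td (d : ℕ) := Fin d → AddCircle (1 : ℝ)

/-- Linear action of an integer matrix on the torus. -/
def matApply {d : ℕ} (A : Matrix (Fin d) (Fin d) ℤ) (x : Td d) : Td d :=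
  fun i => ∑ j, A i j • x j

/-- The sup of the absolute values of the entries of an integer matrix. -/
def mnorm {d : ℕ} (A : Matrix (Fin d) (Fin d) ℤ) : ℕ :=
  Finset.univ.sup fun i => Finset.univ.sup fun j => (A i j).natAbs

/-- A finite subset `F ⊂ T^1` is `(C, L)`-diophantine: any nonzero integer family
`(L_f)` supported on `F` with `d(∑ L_f f, 0) ≤ C / (max |L_f|)^L` satisfies `∑ L_f f = 0`. -/
def IsDioph (C L : ℝ) (F : Finset (AddCircle (1 : ℝ))) : Prop :=
  ∀ Lf : AddCircle (1 : ℝ) → ℤ, (∀ f ∉ F, Lf f = 0) → (∃ f ∈ F, Lf f ≠ 0) →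
    dist (∑ f ∈ F, Lf f • f) (0 : AddCircle (1 : ℝ)) ≤
        C / ((F.sup fun f => (Lf f).natAbs : ℕ) : ℝ) ^ L →
    ∑ f ∈ F, Lf f • f = 0

/-- The matrix version of the diophantine property for a finite `B ⊂ T^d`: any nonzero
family of integer matrices `(M_b)` supported on `B` with `d(∑ M_b b, 0) ≤ C / (max ‖M_b‖)^L`
satisfies `∑ M_b b = 0`. -/
def MatDioph (d : ℕ) (C L : ℝ) (B : Finset (Td d)) : Prop :=
  ∀ M : Td d → Matrix (Fin d) (Fin d) ℤ, (∀ b ∉ B, M b = 0) → (∃ b ∈ B, M b ≠ 0) →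
    dist (∑ b ∈ B, matApply (M b) b) (0 : Td d) ≤
        C / ((B.sup fun b => mnorm (M b) : ℕ) : ℝ) ^ L →
    ∑ b ∈ B, matApply (M b) b = 0

lemma tdist_le_half (x : AddCircle (1 : ℝ)) : dist x 0 ≤ 1 / 2 := by
  rw [dist_zero_right]
  simpa using AddCircle.norm_le_half_period (p := (1 : ℝ)) one_ne_zero

lemma natAbs_sum_le {α : Type*} (s : Finset α) (f : α → ℤ) :
    (∑ a ∈ s, f a).natAbs ≤ ∑ a ∈ s, (f a).natAbs := by
  classical
  induction s using Finset.induction_on with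
  | empty => simp
  | insert _ _ h ih =>
    rw [Finset.sum_insert h, Finset.sum_insert h]
    exact (Int.natAbs_add_le _ _).trans (Nat.add_le_add_left ih _)

lemma exists_big (c L : ℝ) (hc : 0 < c) (hL : L < 0) :
    ∃ n : ℕ, 1 ≤ n ∧ ∀ m : ℕ, n ≤ m → 1 ≤ c / (m : ℝ) ^ L := by
  have ht : Filter.Tendsto (fun n : ℕ => ((n : ℝ)) ^ (-L)) Filter.atTop Filter.atTop :=
    (tendsto_rpow_atTop (by linarith)).comp tendsto_natCast_atTop_atTop
  obtain ⟨n0, hn0⟩ := Filter.eventually_atTop.mp (ht.eventually_ge_atTop (1 / c))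
  refine ⟨max n0 1, le_max_right _ _, fun m hm => ?_⟩
  have hm1 : 1 ≤ m := le_trans (le_max_right n0 1) hm
  have hmpos : (0 : ℝ) < (m : ℝ) := by exact_mod_cast hm1
  have h1 : 1 / c ≤ (m : ℝ) ^ (-L) := hn0 m (le_trans (le_max_left n0 1) hm)
  have h2 : (m : ℝ) ^ (-L) = ((m : ℝ) ^ L)⁻¹ := Real.rpow_neg hmpos.le L
  calc (1 : ℝ) = c * (1 / c) := by field_simp
    _ ≤ c * ((m : ℝ) ^ (-L)) := mul_le_mul_of_nonneg_left h1 hc.le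
    _ = c / (m : ℝ) ^ L := by rw [h2, div_eq_mul_inv]

lemma cancel_smul {f : AddCircle (1 : ℝ)} {n : ℕ} (h1 : (n : ℤ) • f = 0)
    (h2 : ((n + 1 : ℕ) : ℤ) • f = 0) : f = 0 := by
  have h2' : ((n : ℤ) + 1) • f = 0 := by push_cast at h2; exact h2
  have : ((n : ℤ) + 1) • f - (n : ℤ) • f = f := by rw [add_smul, one_smul]; abel
  rw [← this, h1, h2', sub_zero]

lemma dioph_neg_zero {C L : ℝ} {F : Finset (AddCircle (1 : ℝ))} (hC : 0 < C) (hL : L < 0)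
    (hd : IsDioph C L F) : ∀ f ∈ F, f = 0 := by
  classical
  intro f hf
  obtain ⟨n, hn1, hbig⟩ := exists_big C L hC hL
  have key : ∀ m : ℕ, n ≤ m → (m : ℤ) • f = 0 := by
    intro m hm
    have hm1 : 1 ≤ m := le_trans hn1 hm
    have hmne : ((m : ℕ) : ℤ) ≠ 0 := by exact_mod_cast Nat.one_le_iff_ne_zero.mp hm1
    set Lf : AddCircle (1 : ℝ) → ℤ := fun g => if g = f then (m : ℤ) else 0 with hLfdef
    have hsup : (F.sup fun g => (Lf g).natAbs) = m := by
      apply le_antisymm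
      · exact Finset.sup_le fun g _ => by simp only [hLfdef]; split <;> simp
      · calc m = (Lf f).natAbs := by simp [hLfdef]
          _ ≤ _ := Finset.le_sup (f := fun g => (Lf g).natAbs) hf
    have hsum : (∑ g ∈ F, Lf g • g) = (m : ℤ) • f := by
      simp only [hLfdef, ite_smul, zero_smul]
      rw [Finset.sum_ite_eq' F f, if_pos hf]
    have h0 := hd Lf (fun g hg => if_neg (fun h : g = f => hg (h ▸ hf)))
      ⟨f, hf, by simp only [hLfdef, if_pos rfl]; exact hmne⟩ ?_
    · rwa [hsum] at h0
    · rw [hsum, hsup]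
      calc dist ((m : ℤ) • f) 0 ≤ 1 / 2 := tdist_le_half _
        _ ≤ 1 := by norm_num
        _ ≤ C / (m : ℝ) ^ L := hbig m hm
  exact cancel_smul (key n le_rfl) (key (n + 1) (Nat.le_succ n))

lemma matdioph_neg_zero {d : ℕ} {C L : ℝ} {B : Finset (Td d)} (hC : 0 < C) (hL : L < 0)
    (hmd : MatDioph d C L B) : ∀ b ∈ B, ∀ j, b j = 0 := by
  classical
  intro b hb j
  obtain ⟨n, hn1, hbig⟩ := exists_big C L hC hL
  have key : ∀ m : ℕ, n ≤ m → (m : ℤ) • b j = 0 := by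
    intro m hm
    have hm1 : 1 ≤ m := le_trans hn1 hm
    have hmne : ((m : ℕ) : ℤ) ≠ 0 := by exact_mod_cast Nat.one_le_iff_ne_zero.mp hm1
    set Q : Matrix (Fin d) (Fin d) ℤ :=
      Matrix.of (fun i' j' => if i' = j ∧ j' = j then (m : ℤ) else 0) with hQ
    set M : Td d → Matrix (Fin d) (Fin d) ℤ := fun b' => if b' = b then Q else 0 with hMdef
    have hQapp : ∀ i' j', Q i' j' = if i' = j ∧ j' = j then (m : ℤ) else 0 := fun _ _ => rfl
    have happ : ∀ i, matApply Q b i = if i = j then (m : ℤ) • b j else 0 := by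
      intro i
      show (∑ j', Q i j' • b j') = _
      by_cases hi : i = j
      · subst hi
        rw [if_pos rfl]
        have : ∀ j', Q i j' • b j' = if j' = i then (m : ℤ) • b j' else 0 := by
          intro j'
          rw [hQapp]
          by_cases h : j' = i
          · simp [h]
          · simp [h]
        simp only [this]
        rw [Finset.sum_ite_eq' Finset.univ i (fun j' => (m : ℤ) • b j')]
        simp
      · rw [if_neg hi]
        apply Finset.sum_eq_zero
        intro j' _
        rw [hQapp, if_neg fun h => hi h.1, zero_smul]
    have hMb : M b = Q := by rw [hMdef]; simp
    have hsum : (∑ b' ∈ B, matApply (M b') b') = matApply Q b := by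
      rw [Finset.sum_eq_single b]
      · rw [hMb]
      · intro b' _ hne
        simp only [hMdef, if_neg hne]
        funext i
        show (∑ j', (0 : Matrix (Fin d) (Fin d) ℤ) i j' • b' j') = _
        simp
      · intro h; exact absurd hb h
    have hsupn : (B.sup fun b' => mnorm (M b')) = m := by
      apply le_antisymm
      · refine Finset.sup_le fun b' _ => ?_
        refine Finset.sup_le fun i _ => Finset.sup_le fun j' _ => ?_
        simp only [hMdef]
        by_cases h : b' = b
        · rw [if_pos h, hQapp]; split <;> simp
        · rw [if_neg h]; simp
      · calc m = (Q j j).natAbs := by rw [hQapp]; simp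
          _ ≤ mnorm (M b) := by
              rw [hMb]
              exact le_trans (Finset.le_sup (f := fun j' => (Q j j').natAbs) (Finset.mem_univ j))
                (Finset.le_sup (f := fun i => Finset.univ.sup fun j' => (Q i j').natAbs)
                  (Finset.mem_univ j))
          _ ≤ _ := Finset.le_sup (f := fun b' => mnorm (M b')) hb
    have h0 := hmd M (fun b' hb' => by
        simp only [hMdef]; rw [if_neg (fun h : b' = b => hb' (h ▸ hb))])
      ⟨b, hb, by
        rw [hMb]
        intro h
        have h2 := congrFun (congrFun h j) j
        rw [hQapp] at h2
        simp at h2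
        exact hmne (by exact_mod_cast h2)⟩ ?_
    · rw [hsum] at h0
      have h1 := congrFun h0 j
      rwa [happ j, if_pos rfl] at h1
    · rw [hsum, hsupn]
      have hr : (1 : ℝ) ≤ C / (m : ℝ) ^ L := hbig m hm
      rw [dist_pi_le_iff (by linarith)]
      intro i
      exact le_trans (tdist_le_half _) (by linarith)
  exact cancel_smul (key n le_rfl) (key (n + 1) (Nat.le_succ n))

/-- Equivalence between the diophantine property of the set `F` of coordinates of a finite
`B ⊂ T^d` and the matrix diophantine property of `B`: if `F` is `(C, L)`-diophantine then
`B` satisfies the matrix property with constant `C / (d|B|)^L`; conversely if `B` satisfies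
the matrix property with constant `C'` then `F` is `(C'/d^L, L)`-diophantine. -/
theorem stmt11 (d : ℕ) (C L : ℝ) (B : Finset (Td d)) (F : Finset (AddCircle (1 : ℝ)))
    (hF : F = B.biUnion fun b => Finset.image b Finset.univ) :
    (IsDioph C L F → MatDioph d (C / ((d * B.card : ℕ) : ℝ) ^ L) L B) ∧
      ∀ C' : ℝ, MatDioph d C' L B → IsDioph (C' / (d : ℝ) ^ L) L F := by
  classical
  constructor
  · -- direction 1
    intro hio M hsupp hex hdist
    obtain ⟨b0, hb0B, hb0⟩ := hex
    rcases Nat.eq_zero_or_pos d with hd0 | hdpos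
    · exfalso
      apply hb0
      subst hd0
      funext i
      exact Fin.elim0 i
    set N := B.sup fun b => mnorm (M b) with hN
    have hN1 : 1 ≤ N := by
      obtain ⟨i, j, hij⟩ : ∃ i j, M b0 i j ≠ 0 := by
        by_contra h
        push_neg at h
        exact hb0 (by funext i j; exact h i j)
      calc 1 ≤ (M b0 i j).natAbs := Int.natAbs_pos.mpr hij
        _ ≤ mnorm (M b0) := le_trans
            (Finset.le_sup (f := fun j => (M b0 i j).natAbs) (Finset.mem_univ j))
            (Finset.le_sup (f := fun i => Finset.univ.sup fun j => (M b0 i j).natAbs)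
              (Finset.mem_univ i))
        _ ≤ N := Finset.le_sup (f := fun b => mnorm (M b)) hb0B
    have hcard : 0 < B.card := Finset.card_pos.mpr ⟨b0, hb0B⟩
    have hX : (0 : ℝ) < ((d * B.card : ℕ) : ℝ) := by
      exact_mod_cast Nat.mul_pos hdpos hcard
    have hXL : (0 : ℝ) < ((d * B.card : ℕ) : ℝ) ^ L := Real.rpow_pos_of_pos hX L
    have hNr : (0 : ℝ) < (N : ℝ) := by exact_mod_cast hN1
    have hNL : (0 : ℝ) < (N : ℝ) ^ L := Real.rpow_pos_of_pos hNr L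
    rcases lt_trichotomy C 0 with hC | hC | hC
    · exfalso
      have : C / ((d * B.card : ℕ) : ℝ) ^ L / (N : ℝ) ^ L < 0 :=
        div_neg_of_neg_of_pos (div_neg_of_neg_of_pos hC hXL) hNL
      linarith [dist_nonneg.trans hdist]
    · rw [hC] at hdist
      simp only [zero_div] at hdist
      exact dist_le_zero.mp hdist
    · rcases le_or_gt 0 L with hL | hL
      · -- main case
        funext i
        set Lf : AddCircle (1 : ℝ) → ℤ :=
          fun f => ∑ b ∈ B, ∑ j, if b j = f then M b i j else 0 with hLfdef
        have hmemF : ∀ b ∈ B, ∀ j : Fin d, b j ∈ F := fun b hb j => by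
          rw [hF]
          exact Finset.mem_biUnion.mpr ⟨b, hb, Finset.mem_image.mpr ⟨j, Finset.mem_univ j, rfl⟩⟩
        have key : ∑ f ∈ F, Lf f • f = ∑ b ∈ B, ∑ j, M b i j • b j := by
          simp only [hLfdef, Finset.sum_smul, ite_smul, zero_smul]
          rw [Finset.sum_comm]
          refine Finset.sum_congr rfl fun b hb => ?_
          rw [Finset.sum_comm]
          refine Finset.sum_congr rfl fun j _ => ?_
          rw [Finset.sum_ite_eq F (b j) (fun f => M b i j • f), if_pos (hmemF b hb j)]
        have goalEq : (∑ b ∈ B, matApply (M b) b) i = ∑ f ∈ F, Lf f • f := by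
          rw [key, Finset.sum_apply]
          rfl
        show (∑ b ∈ B, matApply (M b) b) i = 0
        rw [goalEq]
        by_cases hz : ∃ f ∈ F, Lf f ≠ 0
        · have hsupple : (F.sup fun f => (Lf f).natAbs) ≤ d * B.card * N := by
            refine Finset.sup_le fun f _ => ?_
            calc (Lf f).natAbs
                ≤ ∑ b ∈ B, (∑ j, if b j = f then M b i j else 0).natAbs := natAbs_sum_le _ _
              _ ≤ ∑ b ∈ B, ∑ j, ((if b j = f then M b i j else 0)).natAbs :=
                  Finset.sum_le_sum fun b _ => natAbs_sum_le _ _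
              _ ≤ ∑ b ∈ B, ∑ _j : Fin d, N := by
                  refine Finset.sum_le_sum fun b hb => Finset.sum_le_sum fun j _ => ?_
                  split
                  · calc (M b i j).natAbs
                        ≤ mnorm (M b) := le_trans
                          (Finset.le_sup (f := fun j => (M b i j).natAbs) (Finset.mem_univ j))
                          (Finset.le_sup (f := fun i => Finset.univ.sup
                            fun j => (M b i j).natAbs) (Finset.mem_univ i))
                      _ ≤ N := Finset.le_sup (f := fun b => mnorm (M b)) hb
                  · simp
              _ = B.card * (d * N) := by
                  simp [Finset.sum_const, Finset.card_univ, mul_comm]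
              _ = d * B.card * N := by ring
          have hsuppos : 0 < (F.sup fun f => (Lf f).natAbs) := by
            obtain ⟨f, hfF, hfne⟩ := hz
            exact lt_of_lt_of_le (Int.natAbs_pos.mpr hfne) (Finset.le_sup (f := fun f => (Lf f).natAbs) hfF)
          have hdist2 : dist (∑ f ∈ F, Lf f • f) (0 : AddCircle (1 : ℝ)) ≤
              C / ((F.sup fun f => (Lf f).natAbs : ℕ) : ℝ) ^ L := by
            have e1 : dist (∑ f ∈ F, Lf f • f) (0 : AddCircle (1 : ℝ)) ≤
                dist (∑ b ∈ B, matApply (M b) b) (0 : Td d) := by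
              rw [← goalEq]
              exact dist_le_pi_dist (∑ b ∈ B, matApply (M b) b) 0 i
            refine le_trans (le_trans e1 hdist) ?_
            rw [div_div, ← Real.mul_rpow hX.le hNr.le]
            have hXN : ((d * B.card : ℕ) : ℝ) * (N : ℝ) = ((d * B.card * N : ℕ) : ℝ) := by
              push_cast; ring
            rw [hXN]
            refine div_le_div_of_nonneg_left hC.le
              (Real.rpow_pos_of_pos (by exact_mod_cast hsuppos) L)
              (Real.rpow_le_rpow (by positivity) (by exact_mod_cast hsupple) hL)
          refine hio Lf (fun f hfF => ?_) hz hdist2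
          refine Finset.sum_eq_zero fun b hb => Finset.sum_eq_zero fun j _ => ?_
          rw [if_neg (fun h : b j = f => hfF (h ▸ hmemF b hb j))]
        · push_neg at hz
          exact Finset.sum_eq_zero fun f hf => by rw [hz f hf, zero_smul]
      · -- L < 0
        have hz := dioph_neg_zero hC hL hio
        have hmemF : ∀ b ∈ B, ∀ j : Fin d, b j ∈ F := fun b hb j => by
          rw [hF]
          exact Finset.mem_biUnion.mpr ⟨b, hb, Finset.mem_image.mpr ⟨j, Finset.mem_univ j, rfl⟩⟩
        funext i
        show (∑ b ∈ B, matApply (M b) b) i = 0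
        rw [Finset.sum_apply]
        refine Finset.sum_eq_zero fun b hb => ?_
        show (∑ j, M b i j • b j) = 0
        refine Finset.sum_eq_zero fun j _ => ?_
        rw [hz (b j) (hmemF b hb j), smul_zero]
  · -- direction 2
    intro C' hmd Lf hsupp hex hdist
    obtain ⟨f0, hf0F, hf0⟩ := hex
    have hrepex : ∀ f ∈ F, ∃ b, b ∈ B ∧ ∃ j : Fin d, b j = f := by
      intro f hf
      rw [hF] at hf
      obtain ⟨b, hbB, hbf⟩ := Finset.mem_biUnion.mp hf
      obtain ⟨j, _, hj⟩ := Finset.mem_image.mp hbf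
      exact ⟨b, hbB, j, hj⟩
    have hdpos : 0 < d := by
      obtain ⟨b1, _, j1, _⟩ := hrepex f0 hf0F
      exact j1.pos
    haveI : Nonempty (Fin d) := ⟨⟨0, hdpos⟩⟩
    choose! rb hrbB rj hrj using hrepex
    set S := F.sup fun f => (Lf f).natAbs with hS
    have hS1 : 1 ≤ S := le_trans (Int.natAbs_pos.mpr hf0) (Finset.le_sup (f := fun f => (Lf f).natAbs) hf0F)
    have hdr : (0 : ℝ) < (d : ℝ) := by exact_mod_cast hdpos
    have hdL : (0 : ℝ) < (d : ℝ) ^ L := Real.rpow_pos_of_pos hdr L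
    have hSr : (0 : ℝ) < (S : ℝ) := by exact_mod_cast hS1
    have hSL : (0 : ℝ) < (S : ℝ) ^ L := Real.rpow_pos_of_pos hSr L
    rcases lt_trichotomy C' 0 with hC | hC | hC
    · exfalso
      have : C' / (d : ℝ) ^ L / (S : ℝ) ^ L < 0 :=
        div_neg_of_neg_of_pos (div_neg_of_neg_of_pos hC hdL) hSL
      linarith [dist_nonneg.trans hdist]
    · rw [hC] at hdist
      simp only [zero_div] at hdist
      exact dist_le_zero.mp hdist
    · rcases le_or_gt 0 L with hL | hL
      · -- main case of direction 2
        set i0 : Fin d := ⟨0, hdpos⟩ with hi0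
        set M : Td d → Matrix (Fin d) (Fin d) ℤ := fun b => Matrix.of fun i j =>
          if i = i0 ∧ b j ∈ F ∧ rb (b j) = b ∧ rj (b j) = j then Lf (b j) else 0 with hMdef
        have hMapp : ∀ b i j, M b i j =
            if i = i0 ∧ b j ∈ F ∧ rb (b j) = b ∧ rj (b j) = j then Lf (b j) else 0 :=
          fun _ _ _ => rfl
        have hMrb : ∀ f ∈ F, M (rb f) i0 (rj f) = Lf f := by
          intro f hf
          rw [hMapp, hrj f hf]
          simp [hf]
        have hsupport : ∀ b ∉ B, M b = 0 := by
          intro b hb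
          funext i j
          rw [hMapp, if_neg]
          · rfl
          · rintro ⟨_, h2, h3, _⟩
            exact hb (h3 ▸ hrbB _ h2)
        have hnonzero : M (rb f0) ≠ 0 := by
          intro h
          apply hf0
          have h2 := congrFun (congrFun h i0) (rj f0)
          rwa [hMrb f0 hf0F] at h2
        have hmnorm_le : ∀ b, mnorm (M b) ≤ S := by
          intro b
          refine Finset.sup_le fun i _ => Finset.sup_le fun j _ => ?_
          rw [hMapp]
          split_ifs with h
          · exact Finset.le_sup (f := fun f => (Lf f).natAbs) h.2.1
          · simp
        have hsupM_le : (B.sup fun b => mnorm (M b)) ≤ S :=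
          Finset.sup_le fun b _ => hmnorm_le b
        have hsupM_ge : 1 ≤ B.sup fun b => mnorm (M b) := by
          calc 1 ≤ (Lf f0).natAbs := Int.natAbs_pos.mpr hf0
            _ = (M (rb f0) i0 (rj f0)).natAbs := by rw [hMrb f0 hf0F]
            _ ≤ mnorm (M (rb f0)) := le_trans
                (Finset.le_sup (f := fun j => (M (rb f0) i0 j).natAbs) (Finset.mem_univ (rj f0)))
                (Finset.le_sup (f := fun i => Finset.univ.sup
                  fun j => ((M (rb f0)) i j).natAbs) (Finset.mem_univ i0))
            _ ≤ _ := Finset.le_sup (f := fun b => mnorm (M b)) (hrbB f0 hf0F)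
        have hcoord : ∀ i, (∑ b ∈ B, matApply (M b) b) i =
            if i = i0 then ∑ f ∈ F, Lf f • f else 0 := by
          intro i
          rw [Finset.sum_apply]
          by_cases hi : i = i0
          · subst hi
            rw [if_pos rfl]
            have RHSexp : ∀ b ∈ B, ∀ j, M b i0 j • b j =
                ∑ f ∈ F, if rb f = b ∧ rj f = j then Lf f • f else 0 := by
              intro b _ j
              rw [hMapp]
              by_cases hc : b j ∈ F ∧ rb (b j) = b ∧ rj (b j) = j
              · rw [if_pos ⟨rfl, hc⟩]
                rw [Finset.sum_eq_single (b j)]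
                · rw [if_pos ⟨hc.2.1, hc.2.2⟩]
                · intro f hf hne
                  rw [if_neg]
                  rintro ⟨h1, h2⟩
                  exact hne (by rw [← hrj f hf, h1, h2])
                · intro h; exact absurd hc.1 h
              · rw [if_neg fun h => hc h.2, zero_smul]
                symm
                refine Finset.sum_eq_zero fun f hf => ?_
                rw [if_neg]
                rintro ⟨h1, h2⟩
                apply hc
                have hfb : b j = f := by rw [← hrj f hf, h1, h2]
                rw [hfb]
                exact ⟨hf, h1, h2⟩
            calc (∑ b ∈ B, matApply (M b) b i0)
                = ∑ b ∈ B, ∑ j, ∑ f ∈ F, (if rb f = b ∧ rj f = j then Lf f • f else 0) := by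
                  refine Finset.sum_congr rfl fun b hb => ?_
                  show (∑ j, M b i0 j • b j) = _
                  exact Finset.sum_congr rfl fun j _ => RHSexp b hb j
              _ = ∑ b ∈ B, ∑ f ∈ F, ∑ j, (if rb f = b ∧ rj f = j then Lf f • f else 0) :=
                  Finset.sum_congr rfl fun b _ => Finset.sum_comm
              _ = ∑ f ∈ F, ∑ b ∈ B, ∑ j, (if rb f = b ∧ rj f = j then Lf f • f else 0) :=
                  Finset.sum_comm
              _ = ∑ f ∈ F, Lf f • f := by
                  refine Finset.sum_congr rfl fun f hf => ?_
                  rw [Finset.sum_eq_single (rb f)]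
                  · rw [Finset.sum_eq_single (rj f)]
                    · rw [if_pos ⟨rfl, rfl⟩]
                    · intro j _ hne
                      rw [if_neg fun h => hne h.2.symm]
                    · intro h; exact absurd (Finset.mem_univ _) h
                  · intro b _ hne
                    refine Finset.sum_eq_zero fun j _ => ?_
                    rw [if_neg fun h => hne h.1.symm]
                  · intro h; exact absurd (hrbB f hf) h
          · rw [if_neg hi]
            refine Finset.sum_eq_zero fun b _ => ?_
            show (∑ j, M b i j • b j) = 0
            refine Finset.sum_eq_zero fun j _ => ?_
            rw [hMapp, if_neg fun h => hi h.1, zero_smul]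
        have hsupMr : (0 : ℝ) < ((B.sup fun b => mnorm (M b) : ℕ) : ℝ) := by
          exact_mod_cast hsupM_ge
        have hr : (0 : ℝ) < C' / ((B.sup fun b => mnorm (M b) : ℕ) : ℝ) ^ L :=
          div_pos hC (Real.rpow_pos_of_pos hsupMr L)
        have hdist2 : dist (∑ b ∈ B, matApply (M b) b) (0 : Td d) ≤
            C' / ((B.sup fun b => mnorm (M b) : ℕ) : ℝ) ^ L := by
          rw [dist_pi_le_iff hr.le]
          intro i
          rw [hcoord i]
          by_cases hi : i = i0
          · rw [if_pos hi]
            calc dist (∑ f ∈ F, Lf f • f) ((0 : Td d) i)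
                ≤ C' / (d : ℝ) ^ L / (S : ℝ) ^ L := hdist
              _ = C' / ((d * S : ℕ) : ℝ) ^ L := by
                  rw [div_div, ← Real.mul_rpow hdr.le hSr.le]
                  norm_num
              _ ≤ C' / ((B.sup fun b => mnorm (M b) : ℕ) : ℝ) ^ L := by
                  refine div_le_div_of_nonneg_left hC.le (Real.rpow_pos_of_pos hsupMr L)
                    (Real.rpow_le_rpow (by positivity) ?_ hL)
                  have : (B.sup fun b => mnorm (M b)) ≤ d * S :=
                    le_trans hsupM_le (Nat.le_mul_of_pos_left S hdpos)
                  exact_mod_cast this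
          · rw [if_neg hi]
            have : dist (0 : AddCircle (1 : ℝ)) ((0 : Td d) i) = 0 := by simp
            rw [this]
            exact hr.le
        have h0 := hmd M hsupport ⟨rb f0, hrbB f0 hf0F, hnonzero⟩ hdist2
        have h1 := congrFun h0 i0
        rw [hcoord i0, if_pos rfl] at h1
        exact h1
      · -- L < 0
        have hz := matdioph_neg_zero hC hL hmd
        refine Finset.sum_eq_zero fun f hf => ?_
        have hfz : f = 0 := by
          rw [← hrj f hf]
          exact hz (rb f) (hrbB f hf) (rj f)
        rw [hfz, smul_zero]

end
end

section
/- Let μ be a probability measure on SL_d(Z) ⋉ T^d and suppose there exist α ∈ (0,1], C, t > 0 such that for every α-Hölder f and all n, sup_x |P^n f(x) − ∫ f dν| ≤ C e^{-tn} ‖f‖_α, where ν is Lebesgue measure on T^d. If μ = (1/2)δ_{(a,0)} + (1/2)δ_{(b,v)} with a,b ∈ SL_d(Z) and v ∈ T^d, then there exist C_0, L > 0 such that for every rational point p/q ∈ Q^d/Z^d, d(v, p/q) ≥ C_0/q^L. -/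
open MeasureTheory Metric
open scoped NNReal ENNReal

noncomputable section

instance : Fact ((0 : ℝ) < 1) := ⟨one_pos⟩

instance {d : ℕ} : MeasurableSpace (Matrix (Fin d) (Fin d) ℤ) :=
  inferInstanceAs (MeasurableSpace (Fin d → Fin d → ℤ))

instance {d : ℕ} : MeasurableSpace (Matrix.SpecialLinearGroup (Fin d) ℤ) :=
  inferInstanceAs (MeasurableSpace {A : Matrix (Fin d) (Fin d) ℤ // A.det = 1})

abbrev SLZ (d : ℕ) := Matrix.SpecialLinearGroup (Fin d) ℤ

/-- Affine action of `SL_d(Z) ⋉ T^d` on the torus: `x ↦ a x + b`. -/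
def actT {d : ℕ} (g : SLZ d × Td d) (x : Td d) : Td d := matApply g.1.1 x + g.2

namespace S18

lemma coe_int_zero (m : ℤ) : (((m : ℝ)) : AddCircle (1 : ℝ)) = 0 := by
  have : ((m : ℝ)) = m • (1 : ℝ) := by simp
  rw [this, AddCircle.coe_zsmul, AddCircle.coe_period, smul_zero]

lemma coe_eq_coe {u w : ℝ} (m : ℤ) (h : u - w = m) :
    ((u : ℝ) : AddCircle (1 : ℝ)) = (w : ℝ) := by
  have : u = w + (m : ℝ) := by linarith
  rw [this, AddCircle.coe_add, coe_int_zero, add_zero]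

/-- The set of `q`-torsion rational points in `Td d`. -/
def Sq (d q : ℕ) : Set (Td d) :=
  {x | ∀ i, ∃ k : ℤ, x i = (((k : ℝ) / (q : ℝ) : ℝ) : AddCircle (1 : ℝ))}

def Fq (d q : ℕ) (r : Fin d → Fin q) : Td d :=
  fun i => ((((r i : ℕ) : ℝ) / (q : ℝ) : ℝ) : AddCircle (1 : ℝ))

lemma range_Fq_subset (d q : ℕ) : Set.range (Fq d q) ⊆ Sq d q := by
  rintro x ⟨r, rfl⟩ i
  exact ⟨(r i : ℕ), by push_cast; rfl⟩

lemma Sq_subset_range (d q : ℕ) (hq : 0 < q) : Sq d q ⊆ Set.range (Fq d q) := by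
  intro x hx
  choose k hk using hx
  have hq' : (q : ℤ) ≠ 0 := by exact_mod_cast hq.ne'
  refine ⟨fun i => ⟨(k i % q).toNat, ?_⟩, ?_⟩
  · have h1 : 0 ≤ k i % q := Int.emod_nonneg _ hq'
    have h2 : k i % q < q := Int.emod_lt_of_pos _ (by exact_mod_cast hq)
    omega
  · funext i
    rw [hk i]
    show ((((((k i % q).toNat : ℕ) : ℝ)) / (q : ℝ) : ℝ) : AddCircle (1:ℝ)) = _
    refine coe_eq_coe (-(k i / (q:ℤ))) ?_
    have h1 : 0 ≤ k i % q := Int.emod_nonneg _ hq'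
    have h3 : ((((k i % q).toNat : ℕ) : ℝ)) = ((k i % q : ℤ) : ℝ) := by
      exact_mod_cast Int.toNat_of_nonneg h1
    have hqR : (q : ℝ) ≠ 0 := by exact_mod_cast hq.ne'
    have keyR : (q:ℝ) * ((k i / (q:ℤ) : ℤ):ℝ) + ((k i % (q:ℤ) : ℤ):ℝ) = ((k i : ℤ):ℝ) := by
      exact_mod_cast Int.mul_ediv_add_emod (k i) (q : ℤ)
    rw [h3, div_sub_div_same, div_eq_iff hqR]
    push_cast
    linarith [keyR]

lemma Sq_finite (d q : ℕ) (hq : 0 < q) : (Sq d q).Finite :=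
  (Set.finite_range (Fq d q)).subset (Sq_subset_range d q hq)

lemma zero_mem_Sq (d q : ℕ) : (0 : Td d) ∈ Sq d q := by
  intro i
  exact ⟨0, by norm_num⟩

lemma add_mem_Sq {d q : ℕ} {x y : Td d} (hx : x ∈ Sq d q) (hy : y ∈ Sq d q) :
    x + y ∈ Sq d q := by
  intro i
  obtain ⟨k, hk⟩ := hx i
  obtain ⟨m, hm⟩ := hy i
  refine ⟨k + m, ?_⟩
  show x i + y i = _
  rw [hk, hm, ← AddCircle.coe_add]
  push_cast
  ring_nf

lemma matApply_mem_Sq {d q : ℕ} (A : Matrix (Fin d) (Fin d) ℤ) {x : Td d}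
    (hx : x ∈ Sq d q) : matApply A x ∈ Sq d q := by
  intro i
  choose k hk using hx
  refine ⟨∑ j, A i j * k j, ?_⟩
  show (∑ j, A i j • x j) = _
  have : ∀ j, A i j • x j =
      ((((A i j * k j : ℤ) : ℝ) / (q : ℝ) : ℝ) : AddCircle (1 : ℝ)) := by
    intro j
    rw [hk j, ← AddCircle.coe_zsmul]
    congr 1
    rw [zsmul_eq_mul]
    push_cast
    ring
  rw [Finset.sum_congr rfl (fun j _ => this j)]
  have hs : ∀ (s : Finset (Fin d)) (g : Fin d → ℝ),
      ((∑ j ∈ s, g j : ℝ) : AddCircle (1:ℝ)) = ∑ j ∈ s, ((g j : ℝ) : AddCircle (1:ℝ)) := by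
    intro s g
    induction s using Finset.induction with
    | empty => simp
    | insert _ _ h ih => rw [Finset.sum_insert h, Finset.sum_insert h, AddCircle.coe_add, ih]
  rw [← hs]
  congr 1
  rw [← Finset.sum_div]
  congr 1
  push_cast
  rfl


instance probAC : IsProbabilityMeasure (volume : Measure (AddCircle (1:ℝ))) :=
  ⟨by rw [AddCircle.measure_univ]; norm_num⟩

instance probTd (d : ℕ) : IsProbabilityMeasure (volume : Measure (Td d)) :=
  MeasureTheory.Measure.pi.instIsProbabilityMeasure _

lemma dist_matApply_le {d : ℕ} (A : Matrix (Fin d) (Fin d) ℤ) (x y : Td d) :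
    dist (matApply A x) (matApply A y) ≤ (∑ i, ∑ j, (|A i j| : ℝ)) * dist x y := by
  rw [dist_pi_le_iff (by positivity)]
  intro i
  calc dist (matApply A x i) (matApply A y i)
      ≤ ∑ j, (|A i j| : ℝ) * dist x y := by
        rw [dist_eq_norm]
        have h0 : matApply A x i - matApply A y i = ∑ j, A i j • (x j - y j) := by
          simp [matApply, ← Finset.sum_sub_distrib, smul_sub]
        rw [h0]
        refine (norm_sum_le _ _).trans (Finset.sum_le_sum fun j _ => ?_)
        have h2 : ‖A i j • (x j - y j)‖ ≤ |(A i j : ℝ)| * ‖x j - y j‖ := by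
          exact (norm_zsmul_le (A i j) (x j - y j)).trans_eq (by rw [Int.norm_eq_abs])
        refine h2.trans (mul_le_mul_of_nonneg_left ?_ (abs_nonneg _))
        rw [← dist_eq_norm]
        exact dist_le_pi_dist x y j
    _ = (∑ j, (|A i j| : ℝ)) * dist x y := by rw [Finset.sum_mul]
    _ ≤ (∑ i, ∑ j, (|A i j| : ℝ)) * dist x y := by
        refine mul_le_mul_of_nonneg_right ?_ dist_nonneg
        exact Finset.single_le_sum (f := fun i => ∑ j, (|A i j| : ℝ))
          (fun i _ => by positivity) (Finset.mem_univ i)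

lemma abs_min_one_sub (s u : ℝ) : |min 1 s - min 1 u| ≤ |s - u| := by
  rcases le_total 1 s with h1 | h1 <;> rcases le_total 1 u with h2 | h2
  · rw [min_eq_left h1, min_eq_left h2]; simp
  · rw [min_eq_left h1, min_eq_right h2,
      abs_of_nonneg (by linarith : (0:ℝ) ≤ 1 - u),
      abs_of_nonneg (by linarith : (0:ℝ) ≤ s - u)]
    linarith
  · rw [min_eq_right h1, min_eq_left h2,
      abs_of_nonpos (by linarith : s - 1 ≤ (0:ℝ)),
      abs_of_nonpos (by linarith : s - u ≤ (0:ℝ))]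
    linarith
  · rw [min_eq_right h1, min_eq_right h2]

lemma rpow_subadd {x y p : ℝ} (hx : 0 ≤ x) (hy : 0 ≤ y) (hp : 0 ≤ p) (hp1 : p ≤ 1) :
    (x + y) ^ p ≤ x ^ p + y ^ p := by
  have key := NNReal.rpow_add_le_add_rpow x.toNNReal y.toNNReal hp hp1
  have h2 : ((x.toNNReal + y.toNNReal : ℝ≥0) : ℝ) = x + y := by
    push_cast
    rw [Real.coe_toNNReal _ hx, Real.coe_toNNReal _ hy]
  have h3 : (((x.toNNReal + y.toNNReal) ^ p : ℝ≥0) : ℝ) ≤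
      ((x.toNNReal ^ p + y.toNNReal ^ p : ℝ≥0) : ℝ) := by exact_mod_cast key
  rw [NNReal.coe_rpow] at h3
  rw [h2] at h3
  refine h3.trans_eq ?_
  push_cast [NNReal.coe_rpow]
  rw [Real.coe_toNNReal _ hx, Real.coe_toNNReal _ hy]

lemma abs_rpow_sub_rpow {x y p : ℝ} (hx : 0 ≤ x) (hy : 0 ≤ y) (hp : 0 < p) (hp1 : p ≤ 1) :
    |x ^ p - y ^ p| ≤ |x - y| ^ p := by
  wlog h : y ≤ x generalizing x y
  · rw [abs_sub_comm, abs_sub_comm x y]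
    exact this hy hx (le_of_not_ge h)
  have h1 : x ^ p ≤ (x - y) ^ p + y ^ p := by
    have := rpow_subadd (by linarith : (0:ℝ) ≤ x - y) hy hp.le hp1
    calc x ^ p = (x - y + y) ^ p := by ring_nf
      _ ≤ (x - y) ^ p + y ^ p := this
  have h2 : y ^ p ≤ x ^ p := Real.rpow_le_rpow hy h hp.le
  rw [abs_of_nonneg (by linarith : (0:ℝ) ≤ x ^ p - y ^ p),
    abs_of_nonneg (by linarith : (0:ℝ) ≤ x - y)]
  linarith

end S18

namespace S18

instance matSing {d : ℕ} : MeasurableSingletonClass (Matrix (Fin d) (Fin d) ℤ) :=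
  inferInstanceAs (MeasurableSingletonClass (Fin d → Fin d → ℤ))

instance slzSing {d : ℕ} : MeasurableSingletonClass (SLZ d) :=
  inferInstanceAs (MeasurableSingletonClass {A : Matrix (Fin d) (Fin d) ℤ // A.det = 1})

lemma integrable_dirac'' {α : Type*} [MeasurableSpace α] [MeasurableSingletonClass α]
    (F : α → ℝ) (z : α) : Integrable F (Measure.dirac z) := by
  constructor
  · refine ⟨fun _ => F z, stronglyMeasurable_const, ?_⟩
    rw [Filter.EventuallyEq, MeasureTheory.ae_dirac_eq]
    exact Filter.eventually_pure.mpr rfl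
  · rw [hasFiniteIntegral_iff_norm, MeasureTheory.lintegral_dirac]
    exact ENNReal.ofReal_lt_top

lemma P_step {d : ℕ} (a b : SLZ d) (v : Td d)
    (g : Td d → ℝ) (x : Td d) :
    ∫ gg, g (actT gg x) ∂((2⁻¹ : ENNReal) • Measure.dirac (a, (0 : Td d)) +
      (2⁻¹ : ENNReal) • Measure.dirac (b, v)) =
      2⁻¹ * g (actT (a, (0 : Td d)) x) + 2⁻¹ * g (actT (b, v) x) := by
  have h1 : Integrable (fun gg => g (actT gg x)) (Measure.dirac (a, (0 : Td d))) :=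
    integrable_dirac'' _ _
  have h2 : Integrable (fun gg => g (actT gg x)) (Measure.dirac (b, v)) :=
    integrable_dirac'' _ _
  rw [integral_add_measure (h1.smul_measure (by simp)) (h2.smul_measure (by simp)),
    integral_smul_measure, integral_smul_measure, integral_dirac, integral_dirac]
  norm_num

end S18
set_option maxHeartbeats 2000000 in
/-- If for `μ = ½δ_{(a,0)} + ½δ_{(b,v)}` the Markov operator satisfies
`sup_x |P^n f(x) - ∫ f dν| ≤ C e^{-tn} ‖f‖_α` for all `α`-Hölder `f` (with
`‖f‖_α = ‖f‖_∞ + m_α(f)`), then `v` is diophantine: there are `C₀, L > 0` with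
`d(v, p/q) ≥ C₀ / q^L` for every rational point `p/q ∈ Q^d/Z^d`. -/
theorem stmt18 (d : ℕ) (α C t : ℝ) (hα0 : 0 < α) (hα1 : α ≤ 1) (hC : 0 < C) (ht : 0 < t)
    (a b : SLZ d) (v : Td d)
    (μ : Measure (SLZ d × Td d))
    (hμ : μ = (2⁻¹ : ENNReal) • Measure.dirac (a, (0 : Td d)) +
      (2⁻¹ : ENNReal) • Measure.dirac (b, v))
    (P : (Td d → ℝ) → Td d → ℝ)
    (hP : ∀ f x, P f x = ∫ g, f (actT g x) ∂μ)
    (hconv : ∀ (f : Td d → ℝ) (A B : ℝ), (∀ x, |f x| ≤ A) →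
      (∀ x y, |f x - f y| ≤ B * dist x y ^ α) →
      ∀ (n : ℕ) (x : Td d),
        |(P^[n]) f x - ∫ y, f y ∂(volume : Measure (Td d))| ≤
          C * Real.exp (-t * n) * (A + B)) :
    ∃ C₀ L : ℝ, 0 < C₀ ∧ 0 < L ∧ ∀ (p : Fin d → ℤ) (q : ℕ), 0 < q →
      C₀ / (q : ℝ) ^ L ≤
        dist v (fun i => (((p i : ℝ) / (q : ℝ) : ℝ) : AddCircle (1 : ℝ))) := by
  classical
  rcases Nat.eq_zero_or_pos d with hd0 | hd
  · -- degenerate case d = 0 : hypotheses are contradictory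
    exfalso
    subst hd0
    have hdist : ∀ x y : Td 0, dist x y = 0 := by
      intro x y
      rw [Subsingleton.elim x y, dist_self]
    have h := hconv (fun _ => 0) 0 (-1) (fun x => by simp)
      (fun x y => by rw [hdist x y, Real.zero_rpow hα0.ne']; simp) 0 (fun i => 0)
    norm_num at h
    nlinarith [h, hC]
  · -- main case d ≥ 1
    obtain ⟨Na, hNa⟩ : ∃ x : ℝ, x = ∑ i, ∑ j, (|a.1 i j| : ℝ) := ⟨_, rfl⟩
    obtain ⟨Nb, hNb⟩ : ∃ x : ℝ, x = ∑ i, ∑ j, (|b.1 i j| : ℝ) := ⟨_, rfl⟩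
    have hNa0 : 0 ≤ Na := by rw [hNa]; positivity
    have hNb0 : 0 ≤ Nb := by rw [hNb]; positivity
    obtain ⟨M, hM⟩ : ∃ x : ℝ, x = 2 + Na + Nb := ⟨_, rfl⟩
    have hM1 : 1 ≤ M := by rw [hM]; linarith
    have hM2 : 2 ≤ M := by rw [hM]; linarith
    have hM0 : 0 < M := by linarith
    have hexp1 : (1:ℝ) ≤ Real.exp 1 := by
      have := Real.add_one_le_exp (1:ℝ); linarith
    have hMe1 : 1 ≤ M * Real.exp 1 := by nlinarith
    have hMe0 : 0 < M * Real.exp 1 := by nlinarith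
    have hMegt1 : 1 < M * Real.exp 1 := by nlinarith
    obtain ⟨β, hβ⟩ : ∃ x : ℝ, x = Real.log (M * Real.exp 1) / t := ⟨_, rfl⟩
    have hβ0 : 0 < β := by rw [hβ]; exact div_pos (Real.log_pos hMegt1) ht
    obtain ⟨L, hL⟩ : ∃ x : ℝ, x = 1 + β := ⟨_, rfl⟩
    have hL0 : 0 < L := by rw [hL]; linarith
    obtain ⟨e₀, he₀⟩ : ∃ x : ℝ, x = 2 + max 0 (Real.log (32 * C)) / t := ⟨_, rfl⟩
    have he₀2 : 2 ≤ e₀ := by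
      rw [he₀]
      have : 0 ≤ max 0 (Real.log (32 * C)) / t := div_nonneg (le_max_left _ _) ht.le
      linarith
    obtain ⟨K, hK⟩ : ∃ x : ℝ, x = (M * Real.exp 1) ^ e₀ := ⟨_, rfl⟩
    have hK0 : 0 < K := by rw [hK]; exact Real.rpow_pos_of_pos hMe0 _
    obtain ⟨c₁, hc₁⟩ : ∃ x : ℝ, x = (4:ℝ)⁻¹ ^ ((1:ℝ)/α) := ⟨_, rfl⟩
    have hc₁0 : 0 < c₁ := by rw [hc₁]; exact Real.rpow_pos_of_pos (by norm_num) _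
    refine ⟨c₁ / (4*K), L, div_pos hc₁0 (by linarith), hL0, ?_⟩
    intro p q hq
    have hq1 : (1:ℝ) ≤ q := by exact_mod_cast hq
    have hq0 : (0:ℝ) < q := by linarith
    have hq4 : (0:ℝ) < 4*(q:ℝ) := by linarith
    obtain ⟨w, hw⟩ : ∃ x : Td d,
      x = fun i => (((p i : ℝ) / (q : ℝ) : ℝ) : AddCircle (1 : ℝ)) := ⟨_, rfl⟩
    obtain ⟨ε, hε⟩ : ∃ x : ℝ, x = dist v w := ⟨_, rfl⟩
    have hε0 : 0 ≤ ε := by rw [hε]; exact dist_nonneg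
    obtain ⟨S, hS⟩ : ∃ x : Set (Td d), x = S18.Sq d q := ⟨_, rfl⟩
    have hSfin : S.Finite := by rw [hS]; exact S18.Sq_finite d q hq
    have hS0 : (0 : Td d) ∈ S := by rw [hS]; exact S18.zero_mem_Sq d q
    have hSne : S.Nonempty := ⟨0, hS0⟩
    have hScpt : IsCompact S := hSfin.isCompact
    have hwS : w ∈ S := by rw [hS, hw]; exact fun i => ⟨p i, rfl⟩
    have hSmemA : ∀ (A : Matrix (Fin d) (Fin d) ℤ) (x : Td d),
        x ∈ S → matApply A x ∈ S := by
      rw [hS]; exact fun A x hx => S18.matApply_mem_Sq A hx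
    have hSadd : ∀ (x y : Td d), x ∈ S → y ∈ S → x + y ∈ S := by
      rw [hS]; exact fun x y hx hy => S18.add_mem_Sq hx hy
    have hSsub : S ⊆ Set.range (S18.Fq d q) := by
      rw [hS]; exact S18.Sq_subset_range d q hq
    obtain ⟨f, hf⟩ : ∃ g : Td d → ℝ,
      g = fun x => 1 - min 1 ((4*(q:ℝ))^α * (infDist x S)^α) := ⟨_, rfl⟩
    have hBpos : (0:ℝ) ≤ (4*(q:ℝ))^α := Real.rpow_nonneg (by linarith) _
    have harg : ∀ x : Td d, 0 ≤ (4*(q:ℝ))^α * (infDist x S)^α := fun x =>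
      mul_nonneg hBpos (Real.rpow_nonneg infDist_nonneg _)
    have hfA : ∀ x, |f x| ≤ 1 := by
      intro x
      rw [abs_le]
      constructor
      · have h1 : min 1 ((4*(q:ℝ))^α * (infDist x S)^α) ≤ 1 := min_le_left _ _
        rw [hf]; dsimp only; linarith
      · have h2 : 0 ≤ min 1 ((4*(q:ℝ))^α * (infDist x S)^α) := le_min (by norm_num) (harg x)
        rw [hf]; dsimp only; linarith
    have hfB : ∀ x y : Td d, |f x - f y| ≤ ((4*(q:ℝ))^α) * dist x y ^ α := by
      intro x y
      have h1 : f x - f y = min 1 ((4*(q:ℝ))^α * (infDist y S)^α)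
          - min 1 ((4*(q:ℝ))^α * (infDist x S)^α) := by rw [hf]; dsimp only; ring
      rw [h1]
      refine (S18.abs_min_one_sub _ _).trans ?_
      rw [← mul_sub, abs_mul, abs_of_nonneg hBpos]
      refine mul_le_mul_of_nonneg_left ?_ hBpos
      refine (S18.abs_rpow_sub_rpow infDist_nonneg infDist_nonneg hα0 hα1).trans ?_
      refine Real.rpow_le_rpow (abs_nonneg _) ?_ hα0.le
      have hxy := infDist_le_infDist_add_dist (x := x) (y := y) (s := S)
      have hyx := infDist_le_infDist_add_dist (x := y) (y := x) (s := S)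
      rw [dist_comm] at hyx
      rw [abs_le]
      constructor <;> linarith
    have hP1 : ∀ (g : Td d → ℝ) (x : Td d),
        P g x = 2⁻¹ * g (actT (a, (0:Td d)) x) + 2⁻¹ * g (actT (b, v) x) := by
      intro g x
      rw [hP, hμ]
      exact S18.P_step a b v g x
    have hactA : ∀ x : Td d, actT (a, (0:Td d)) x = matApply a.1 x := by
      intro x; simp [actT]
    have hactB : ∀ x : Td d, actT (b, v) x = matApply b.1 x + v := fun x => rfl
    -- main induction: lower bound for the iterates of P at points near S
    have hInd : ∀ (n : ℕ) (η : ℝ) (x : Td d), infDist x S ≤ η →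
        1 - (4*(q:ℝ))^α * (M^n * (η + (n:ℝ)*ε))^α ≤ (P^[n]) f x := by
      intro n
      induction n with
      | zero =>
        intro η x hx
        simp only [Function.iterate_zero, id_eq, pow_zero, Nat.cast_zero, zero_mul,
          add_zero, one_mul]
        have hd0 : (0:ℝ) ≤ infDist x S := infDist_nonneg
        have hmin : min 1 ((4*(q:ℝ))^α * (infDist x S)^α) ≤ (4*(q:ℝ))^α * η^α :=
          (min_le_right _ _).trans
            (mul_le_mul_of_nonneg_left (Real.rpow_le_rpow hd0 hx hα0.le) hBpos)
        rw [hf]; dsimp only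
        linarith
      | succ n ih =>
        intro η x hx
        have hη0 : 0 ≤ η := le_trans infDist_nonneg hx
        obtain ⟨s, hsS, hsd⟩ := hScpt.exists_infDist_eq_dist hSne x
        have hds : dist x s ≤ η := by rw [← hsd]; exact hx
        have hds0 : 0 ≤ dist x s := dist_nonneg
        rw [Function.iterate_succ_apply', hP1]
        have hA : infDist (actT (a, (0:Td d)) x) S ≤ M*η + ε := by
          rw [hactA]
          refine le_trans (infDist_le_dist_of_mem (hSmemA a.1 s hsS)) ?_
          refine le_trans (S18.dist_matApply_le a.1 x s) ?_
          rw [← hNa]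
          have hNaM : Na ≤ M := by rw [hM]; linarith
          have : Na * dist x s ≤ M * η := mul_le_mul hNaM hds hds0 (by linarith)
          linarith
        have hB : infDist (actT (b, v) x) S ≤ M*η + ε := by
          rw [hactB]
          have hmem : matApply b.1 s + w ∈ S := hSadd _ _ (hSmemA b.1 s hsS) hwS
          refine le_trans (infDist_le_dist_of_mem hmem) ?_
          calc dist (matApply b.1 x + v) (matApply b.1 s + w)
              ≤ dist (matApply b.1 x + v) (matApply b.1 s + v)
                + dist (matApply b.1 s + v) (matApply b.1 s + w) := dist_triangle _ _ _
            _ = dist (matApply b.1 x) (matApply b.1 s) + dist v w := by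
                rw [dist_add_right, dist_add_left]
            _ ≤ M*η + ε := by
                have h1 := S18.dist_matApply_le b.1 x s
                rw [← hNb] at h1
                have hNbM : Nb ≤ M := by rw [hM]; linarith
                have h3 : Nb * dist x s ≤ M * η := mul_le_mul hNbM hds hds0 (by linarith)
                have h4 : dist (matApply b.1 x) (matApply b.1 s) ≤ M * η := le_trans h1 h3
                rw [← hε]
                linarith
        have h1 := ih (M*η + ε) _ hA
        have h2 := ih (M*η + ε) _ hB
        have hmono : (4*(q:ℝ))^α * (M^n * ((M*η+ε) + (n:ℝ)*ε))^α
            ≤ (4*(q:ℝ))^α * (M^(n+1) * (η + ((n:ℕ)+1:ℝ)*ε))^α := by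
          have hnn : (0:ℝ) ≤ M^n * ((M*η+ε) + (n:ℝ)*ε) :=
            mul_nonneg (pow_nonneg hM0.le n) (add_nonneg
              (add_nonneg (mul_nonneg hM0.le hη0) hε0)
              (mul_nonneg (Nat.cast_nonneg n) hε0))
          refine mul_le_mul_of_nonneg_left (Real.rpow_le_rpow hnn ?_ hα0.le) hBpos
          rw [pow_succ]
          have e1 : M^n * ((M*η+ε) + (n:ℝ)*ε) = M^n*M*η + M^n*((n:ℝ)+1)*ε := by ring
          have e2 : M^n*M * (η + ((n:ℕ)+1:ℝ)*ε) = M^n*M*η + (M^n*((n:ℝ)+1)*ε)*M := by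
            ring
          have hnn2 : (0:ℝ) ≤ M^n*((n:ℝ)+1)*ε :=
            mul_nonneg (mul_nonneg (pow_nonneg hM0.le n)
              (by positivity : (0:ℝ) ≤ (n:ℝ)+1)) hε0
          have e3 : M^n*((n:ℝ)+1)*ε ≤ (M^n*((n:ℝ)+1)*ε)*M :=
            le_mul_of_one_le_right hnn2 hM1
          rw [e1, e2]
          linarith
        have hcast : ((n+1 : ℕ) : ℝ) = ((n:ℕ)+1:ℝ) := by push_cast; ring
        rw [hcast]
        linarith
    -- the integral of f is at most 1/2
    obtain ⟨E, hE⟩ : ∃ x : Set (Td d),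
      x = {y : Td d | infDist y S ≤ (4*(q:ℝ))⁻¹} := ⟨_, rfl⟩
    have hEmem : ∀ x : Td d, x ∈ E ↔ infDist x S ≤ (4*(q:ℝ))⁻¹ := by
      rw [hE]; exact fun x => Iff.rfl
    have hEclosed : IsClosed E := by
      rw [hE]; exact isClosed_le (continuous_infDist_pt S) continuous_const
    have hEmeas : MeasurableSet E := hEclosed.measurableSet
    have hfle : ∀ x, f x ≤ Set.indicator E (fun _ => (1:ℝ)) x := by
      intro x
      by_cases hx : x ∈ E
      · rw [Set.indicator_of_mem hx]
        exact (abs_le.mp (hfA x)).2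
      · rw [Set.indicator_of_notMem hx]
        have hlt : (4*(q:ℝ))⁻¹ < infDist x S := by
          by_contra hcon
          push_neg at hcon
          exact hx ((hEmem x).mpr hcon)
        have hgt1 : (1:ℝ) < 4*(q:ℝ) * infDist x S := by
          have := mul_lt_mul_of_pos_left hlt hq4
          rwa [mul_inv_cancel₀ hq4.ne'] at this
        have hrw : (4*(q:ℝ))^α * (infDist x S)^α = (4*(q:ℝ) * infDist x S)^α :=
          (Real.mul_rpow (by linarith) infDist_nonneg).symm
        have hgt : (1:ℝ) < (4*(q:ℝ) * infDist x S)^α :=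
          (Real.one_lt_rpow_iff_of_pos (by linarith)).mpr (Or.inl ⟨hgt1, hα0⟩)
        rw [hf]; dsimp only
        rw [hrw, min_eq_left hgt.le]
        linarith
    have hfcont : Continuous f := by
      rw [hf]
      apply Continuous.sub continuous_const
      apply Continuous.min continuous_const
      exact continuous_const.mul ((continuous_infDist_pt S).rpow_const (fun x => Or.inr hα0.le))
    have hfint : Integrable f (volume : Measure (Td d)) :=
      ⟨hfcont.aestronglyMeasurable,
        HasFiniteIntegral.of_bounded (C := 1) (Filter.Eventually.of_forall (fun x => by
          rw [Real.norm_eq_abs]; exact hfA x))⟩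
    have hindint : Integrable (Set.indicator E (fun _ => (1:ℝ))) (volume : Measure (Td d)) := by
      rw [integrable_indicator_iff hEmeas]
      exact integrableOn_const (measure_lt_top _ _).ne
    have hvolE : volume E ≤ ENNReal.ofReal (1/2) := by
      have hcover : E ⊆ ⋃ r ∈ (Finset.univ : Finset (Fin d → Fin q)),
          Metric.closedBall (S18.Fq d q r) ((4*(q:ℝ))⁻¹) := by
        intro x hx
        obtain ⟨s, hsS, hsd⟩ := hScpt.exists_infDist_eq_dist hSne x
        obtain ⟨r, hr⟩ := hSsub hsS
        simp only [Set.mem_iUnion]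
        refine ⟨r, Finset.mem_univ r, ?_⟩
        rw [Metric.mem_closedBall, hr, ← hsd]
        exact (hEmem x).mp hx
      refine le_trans (measure_mono hcover) ?_
      refine le_trans (measure_biUnion_finset_le _ _) ?_
      have hball : ∀ r : Fin d → Fin q,
          volume (Metric.closedBall (S18.Fq d q r) ((4*(q:ℝ))⁻¹))
            = (ENNReal.ofReal ((2*(q:ℝ))⁻¹))^d := by
        intro r
        rw [closedBall_pi _ (by positivity)]
        have hpi : volume (Set.pi Set.univ fun i =>
            Metric.closedBall (S18.Fq d q r i) ((4*(q:ℝ))⁻¹)) =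
            ∏ i : Fin d, volume (Metric.closedBall (S18.Fq d q r i) ((4*(q:ℝ))⁻¹)) :=
          volume_pi_pi _
        rw [hpi]
        have hone : ∀ i : Fin d, volume (Metric.closedBall (S18.Fq d q r i) ((4*(q:ℝ))⁻¹))
            = ENNReal.ofReal ((2*(q:ℝ))⁻¹) := by
          intro i
          rw [AddCircle.volume_closedBall (T := 1)]
          congr 1
          have h2q : (2*(q:ℝ))⁻¹ ≤ 1 := by
            rw [inv_le_one_iff₀]
            right; linarith
          have heq : 2 * (4*(q:ℝ))⁻¹ = (2*(q:ℝ))⁻¹ := by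
            field_simp
            ring
          rw [heq, min_eq_right h2q]
        rw [Finset.prod_congr rfl (fun i _ => hone i), Finset.prod_const, Finset.card_univ,
          Fintype.card_fin]
      rw [Finset.sum_congr rfl (fun r _ => hball r), Finset.sum_const, Finset.card_univ]
      have hcard : Fintype.card (Fin d → Fin q) = q^d := by
        simp
      rw [hcard]
      have hstep : (q^d : ℕ) • (ENNReal.ofReal ((2*(q:ℝ))⁻¹))^d
          = ((q:ENNReal) * ENNReal.ofReal ((2*(q:ℝ))⁻¹))^d := by
        rw [nsmul_eq_mul, mul_pow]
        congr 1
        push_cast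
        ring
      rw [hstep]
      have hhalf : (q:ENNReal) * ENNReal.ofReal ((2*(q:ℝ))⁻¹) = ENNReal.ofReal (1/2) := by
        rw [← ENNReal.ofReal_natCast q, ← ENNReal.ofReal_mul (by positivity)]
        have hqq : (q:ℝ) * (2*(q:ℝ))⁻¹ = 1/2 := by
          rw [mul_inv, ← mul_assoc, mul_comm (q:ℝ) (2:ℝ)⁻¹, mul_assoc,
            mul_inv_cancel₀ hq0.ne', mul_one]
          norm_num
        rw [hqq]
      rw [hhalf]
      calc (ENNReal.ofReal (1/2))^d ≤ (ENNReal.ofReal (1/2))^1 := by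
            refine pow_le_pow_of_le_one (by simp) ?_ hd
            rw [← ENNReal.ofReal_one]
            exact ENNReal.ofReal_le_ofReal (by norm_num)
        _ = ENNReal.ofReal (1/2) := pow_one _
    have hint : ∫ y, f y ∂(volume : Measure (Td d)) ≤ 1/2 := by
      refine le_trans (integral_mono hfint hindint hfle) ?_
      rw [integral_indicator_const _ hEmeas, smul_eq_mul, mul_one]
      refine le_trans (ENNReal.toReal_mono ENNReal.ofReal_ne_top hvolE) ?_
      rw [ENNReal.toReal_ofReal (by norm_num)]
    -- choose the number of steps n
    obtain ⟨x₀, hx₀⟩ : ∃ x : ℝ, x = (Real.log (32*C) + Real.log q)/t := ⟨_, rfl⟩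
    obtain ⟨n, hn⟩ : ∃ m : ℕ, m = ⌈x₀⌉₊ + 1 := ⟨_, rfl⟩
    have hnx : x₀ ≤ (n:ℝ) := by
      have := Nat.le_ceil x₀
      rw [hn]
      push_cast
      linarith
    have hnpos : (0:ℝ) < n := by
      rw [hn]; push_cast; positivity
    have h32C : (0:ℝ) < 32*C := by linarith
    have hexp : Real.exp (-t*(n:ℝ)) ≤ (32*C)⁻¹ * (q:ℝ)⁻¹ := by
      have htx : t * x₀ = Real.log (32*C) + Real.log q := by
        rw [hx₀]
        field_simp
      have h1 : -t*(n:ℝ) ≤ -(Real.log (32*C) + Real.log q) := by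
        have h2 := mul_le_mul_of_nonneg_left hnx ht.le
        rw [htx] at h2
        linarith
      refine (Real.exp_le_exp.mpr h1).trans ?_
      rw [neg_add, Real.exp_add, Real.exp_neg, Real.exp_neg, Real.exp_log h32C,
        Real.exp_log hq0]
    have hup := hconv f 1 ((4*(q:ℝ))^α) hfA hfB n 0
    have htail : C * Real.exp (-t*(n:ℝ)) * (1 + (4*(q:ℝ))^α) ≤ 4⁻¹ := by
      have h4q1 : (1:ℝ) ≤ 4*(q:ℝ) := by linarith
      have h1 : (4*(q:ℝ))^α ≤ 4*(q:ℝ) := by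
        calc (4*(q:ℝ))^α ≤ (4*(q:ℝ))^(1:ℝ) := Real.rpow_le_rpow_of_exponent_le h4q1 hα1
          _ = 4*(q:ℝ) := Real.rpow_one _
      have h2 : 1 + (4*(q:ℝ))^α ≤ 8*(q:ℝ) := by linarith
      calc C * Real.exp (-t*(n:ℝ)) * (1 + (4*(q:ℝ))^α)
          ≤ C * ((32*C)⁻¹ * (q:ℝ)⁻¹) * (8*(q:ℝ)) := by
            refine mul_le_mul (mul_le_mul_of_nonneg_left hexp hC.le) h2
              (by positivity) (by positivity)
        _ = 4⁻¹ := by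
            field_simp
            ring
    have hlow := hInd n 0 0 (le_of_eq (infDist_zero_of_mem hS0))
    have habs := abs_le.mp hup
    have hcomb : (4:ℝ)⁻¹ ≤ (4*(q:ℝ))^α * (M^n * ((0:ℝ) + (n:ℝ)*ε))^α := by
      have hb1 := habs.1
      have hb2 := habs.2
      linarith
    obtain ⟨X, hX⟩ : ∃ x : ℝ, x = 4*(q:ℝ) * (M^n * ((n:ℝ)*ε)) := ⟨_, rfl⟩
    have hin0 : (0:ℝ) ≤ M^n * ((n:ℝ)*ε) :=
      mul_nonneg (pow_nonneg hM0.le n) (mul_nonneg (Nat.cast_nonneg n) hε0)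
    have hXnn : (0:ℝ) ≤ X := by
      rw [hX]; exact mul_nonneg (by linarith) hin0
    have hXpow : (4*(q:ℝ))^α * (M^n * ((0:ℝ) + (n:ℝ)*ε))^α = X^α := by
      rw [zero_add, hX, Real.mul_rpow (by linarith) hin0]
    rw [hXpow] at hcomb
    have hc₁X : c₁ ≤ X := by
      by_contra hcon
      push_neg at hcon
      have hlt : X^α < c₁^α := Real.rpow_lt_rpow hXnn hcon hα0
      have hc₁α : c₁^α = 4⁻¹ := by
        rw [hc₁, ← Real.rpow_mul (by norm_num : (0:ℝ) ≤ 4⁻¹), one_div,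
          inv_mul_cancel₀ hα0.ne', Real.rpow_one]
      rw [hc₁α] at hlt
      linarith
    have hden : (0:ℝ) < 4*(q:ℝ) * M^n * (n:ℝ) :=
      mul_pos (mul_pos hq4 (pow_pos hM0 n)) hnpos
    have hεlow : c₁ / (4*(q:ℝ) * M^n * (n:ℝ)) ≤ ε := by
      rw [div_le_iff₀ hden]
      calc c₁ ≤ X := hc₁X
        _ = ε * (4*(q:ℝ) * M^n * (n:ℝ)) := by rw [hX, hε]; ring
    have hlogq : 0 ≤ Real.log q := Real.log_nonneg hq1
    have hnle : (n:ℝ) ≤ e₀ + Real.log q / t := by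
      have hlq : 0 ≤ Real.log q / t := div_nonneg hlogq ht.le
      rcases le_or_gt x₀ 0 with hx | hx
      · have hceil : ⌈x₀⌉₊ = 0 := Nat.ceil_eq_zero.mpr hx
        rw [hn, hceil]
        push_cast
        linarith
      · have h1 : (⌈x₀⌉₊:ℝ) < x₀ + 1 := Nat.ceil_lt_add_one hx.le
        have h2 : x₀ ≤ max 0 (Real.log (32*C))/t + Real.log q / t := by
          rw [hx₀, add_div]
          gcongr
          exact le_max_right _ _
        rw [hn, he₀]
        push_cast
        linarith
    have hMn_n : M^n * (n:ℝ) ≤ (M*Real.exp 1)^(e₀ + Real.log q / t) := by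
      have hstep1 : M^n * (n:ℝ) ≤ M^n * Real.exp n := by
        refine mul_le_mul_of_nonneg_left ?_ (pow_nonneg hM0.le n)
        linarith [Real.add_one_le_exp ((n:ℝ))]
      have hstep2 : M^n * Real.exp (n:ℝ) = (M*Real.exp 1)^n := by
        rw [mul_pow, ← Real.exp_nat_mul, mul_one]
      calc M^n * (n:ℝ) ≤ M^n * Real.exp n := hstep1
        _ = (M*Real.exp 1)^((n:ℕ):ℝ) := by rw [hstep2, Real.rpow_natCast]
        _ ≤ (M*Real.exp 1)^(e₀ + Real.log q / t) :=
            Real.rpow_le_rpow_of_exponent_le hMe1 hnle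
    have hsplit : (M*Real.exp 1)^(e₀ + Real.log q / t) = K * (q:ℝ)^β := by
      rw [Real.rpow_add hMe0, hK]
      congr 1
      rw [Real.rpow_def_of_pos hMe0, Real.rpow_def_of_pos hq0, hβ]
      ring_nf
    have hqL : (q:ℝ)^L = (q:ℝ) * (q:ℝ)^β := by
      rw [hL, Real.rpow_add hq0, Real.rpow_one]
    have hKb : 4*(q:ℝ)*M^n*(n:ℝ) ≤ 4*K*(q:ℝ)^L := by
      calc 4*(q:ℝ)*M^n*(n:ℝ) = 4*(q:ℝ)*(M^n*(n:ℝ)) := by ring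
        _ ≤ 4*(q:ℝ)*(K*(q:ℝ)^β) := by
            refine mul_le_mul_of_nonneg_left ?_ (by linarith)
            rw [← hsplit]; exact hMn_n
        _ = 4*K*((q:ℝ)^L) := by rw [hqL]; ring
    rw [← hw, ← hε]
    calc c₁/(4*K) / (q:ℝ)^L = c₁ / (4*K*(q:ℝ)^L) := by rw [div_div]
      _ ≤ c₁ / (4*(q:ℝ)*M^n*(n:ℝ)) :=
          div_le_div_of_nonneg_left hc₁0.le hden hKb
      _ ≤ ε := hεlow

end
end
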